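/- arXiv:1302.5653 — 4 statements merged into one kernel-verified Lean document; each statement's English description precedes it below -/
import Mathlib

section
/- For every natural number n ≥ 1 there exists a meager Fσ-subset A of the finite-dimensional cube Iⁿ = Fin n → [0,1] such that for every meager subset B of Iⁿ there is a homeomorphism h : Iⁿ → Iⁿ with h(B) ⊆ A; that is, Iⁿ contains a universal meager Fσ-set. -/
open Set Topology

/-- The finite-dimensional cube `Iⁿ = Fin n → [0,1]` with the product topology. -/
abbrev Cube (n : ℕ) : Type := Fin n → unitInterval

/-- A set is `Fσ` if it is a countable union of closed sets. -/
def IsFsigma {X : Type*} [TopologicalSpace X] (A : Set X) : Prop :=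
  ∃ F : ℕ → Set X, (∀ n, IsClosed (F n)) ∧ A = ⋃ n, F n

noncomputable section

namespace UMF

/-! ### Base 5 expansions -/

/-- value of a base-5 digit sequence -/
def val (d : ℕ → Fin 5) : ℝ := ∑' m, (d m : ℝ) / 5 ^ (m + 1)

lemma geo_eq : (fun m : ℕ => (4:ℝ)/5^(m+1)) = (fun m : ℕ => (4/5) * (1/5)^m) := by
  funext m
  rw [pow_succ, one_div, inv_pow]
  field_simp

lemma summable_bound : Summable (fun m : ℕ => (4:ℝ)/5^(m+1)) := by
  rw [geo_eq]
  exact (summable_geometric_of_lt_one (by norm_num) (by norm_num)).mul_left _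

lemma tsum_bound : ∑' m : ℕ, (4:ℝ)/5^(m+1) = 1 := by
  rw [geo_eq, tsum_mul_left, tsum_geometric_of_lt_one (by norm_num) (by norm_num)]
  norm_num

lemma digit_le (v : Fin 5) : (v : ℝ) ≤ 4 := by
  exact_mod_cast Nat.le_of_lt_succ v.isLt

lemma summable_val (d : ℕ → Fin 5) : Summable (fun m => (d m : ℝ)/5^(m+1)) := by
  refine Summable.of_nonneg_of_le (fun m => by positivity) (fun m => ?_) summable_bound
  gcongr
  exact digit_le _

lemma val_nonneg (d : ℕ → Fin 5) : 0 ≤ val d :=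
  tsum_nonneg (fun m => by positivity)

lemma val_le_one (d : ℕ → Fin 5) : val d ≤ 1 := by
  rw [← tsum_bound]
  refine Summable.tsum_le_tsum (fun m => ?_) (summable_val d) summable_bound
  gcongr
  exact digit_le _

lemma summable_tail (d : ℕ → Fin 5) (M : ℕ) :
    Summable (fun j => (d (j+M) : ℝ)/5^(j+M+1)) :=
  (summable_val d).comp_injective (add_left_injective M)

lemma val_prefix (d : ℕ → Fin 5) (M : ℕ) :
    val d = (∑ j ∈ Finset.range M, (d j : ℝ)/5^(j+1)) + ∑' j, (d (j+M) : ℝ)/5^(j+M+1) := by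
  rw [val, ← Summable.sum_add_tsum_nat_add M (summable_val d)]

lemma tail4_eq (M : ℕ) : ∑' j : ℕ, (4:ℝ)/5^(j+M+1) = (1/5)^M := by
  have he : ∀ j : ℕ, (4:ℝ)/5^(j+M+1) = (1/5)^M * (4/5^(j+1)) := by
    intro j
    rw [one_div, inv_pow, ← div_eq_inv_mul _ (5^M:ℝ)]
    rw [div_div, ← pow_add]
    ring_nf
  simp_rw [he]
  rw [tsum_mul_left, tsum_bound, mul_one]

lemma tail_nonneg (d : ℕ → Fin 5) (M : ℕ) : 0 ≤ ∑' j, (d (j+M) : ℝ)/5^(j+M+1) :=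
  tsum_nonneg (fun m => by positivity)

lemma tail_le (d : ℕ → Fin 5) (M : ℕ) : ∑' j, (d (j+M) : ℝ)/5^(j+M+1) ≤ (1/5)^M := by
  rw [← tail4_eq M]
  refine Summable.tsum_le_tsum (fun j => ?_) (summable_tail d M) ?_
  · gcongr
    exact digit_le _
  · have := summable_bound.comp_injective (add_left_injective M)
    exact this

lemma prefix4_eq (M : ℕ) :
    ∑ j ∈ Finset.range M, (4:ℝ)/5^(j+1) = 1 - (1/5)^M := by
  have := Summable.sum_add_tsum_nat_add (f := fun m : ℕ => (4:ℝ)/5^(m+1)) M summable_bound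
  rw [tsum_bound] at this
  have h2 : ∑' j : ℕ, (4:ℝ)/5^(j+M+1) = (1/5)^M := tail4_eq M
  linarith [this, h2]

/-- if two digit sequences agree below `M`, values differ by at most `5⁻ᴹ`. -/
lemma val_dist (d d' : ℕ → Fin 5) (M : ℕ) (h : ∀ j < M, d j = d' j) :
    |val d - val d'| ≤ (1/5)^M := by
  rw [val_prefix d M, val_prefix d' M]
  have : ∑ j ∈ Finset.range M, (d j : ℝ)/5^(j+1) = ∑ j ∈ Finset.range M, (d' j : ℝ)/5^(j+1) :=
    Finset.sum_congr rfl (fun j hj => by rw [h j (Finset.mem_range.mp hj)])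
  rw [this, abs_le]
  constructor <;> nlinarith [tail_nonneg d M, tail_le d M, tail_nonneg d' M, tail_le d' M]

lemma val_eq_one (d : ℕ → Fin 5) (h : val d = 1) : ∀ m, d m = 4 := by
  intro m
  by_contra hm
  have h4 : (d m : ℝ) ≤ 3 := by
    have : (d m : ℕ) < 4 := lt_of_le_of_ne (Nat.le_of_lt_succ (d m).isLt)
      (fun he => hm (Fin.ext he))
    exact_mod_cast Nat.lt_succ_iff.mp this
  have hsum : ∑ j ∈ Finset.range (m+1), (d j : ℝ)/5^(j+1)
      ≤ (1 - (1/5)^(m+1)) - 1/5^(m+1) := by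
    rw [← prefix4_eq (m+1)]
    have hstep : ∀ j ∈ Finset.range (m+1), (d j : ℝ)/5^(j+1) ≤
        (4:ℝ)/5^(j+1) - (if j = m then (1:ℝ)/5^(m+1) else 0) := by
      intro j _
      by_cases hj : j = m
      · subst hj
        rw [if_pos rfl, div_sub_div_same]
        gcongr
        linarith
      · simp only [if_neg hj, sub_zero]
        gcongr
        exact digit_le _
    calc ∑ j ∈ Finset.range (m+1), (d j : ℝ)/5^(j+1)
        ≤ ∑ j ∈ Finset.range (m+1),
            ((4:ℝ)/5^(j+1) - (if j = m then (1:ℝ)/5^(m+1) else 0)) :=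
          Finset.sum_le_sum hstep
      _ = (∑ j ∈ Finset.range (m+1), (4:ℝ)/5^(j+1)) - 1/5^(m+1) := by
          rw [Finset.sum_sub_distrib, Finset.sum_ite_eq' (Finset.range (m+1)) m]
          rw [if_pos (Finset.mem_range.mpr (Nat.lt_succ_self m))]
  have hv := val_prefix d (m+1)
  have ht := tail_le d (m+1)
  have h5 : ((1:ℝ)/5)^(m+1) = 1/5^(m+1) := by rw [one_div_pow]
  rw [h] at hv
  rw [h5] at ht hsum
  have hpos : (0:ℝ) < 1/5^(m+1) := by positivity
  linarith

lemma val_eq_zero (d : ℕ → Fin 5) (h : val d = 0) : ∀ m, d m = 0 := by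
  intro m
  have hle : (d m : ℝ)/5^(m+1) ≤ val d :=
    Summable.le_tsum (summable_val d) m (fun j _ => by positivity)
  rw [h] at hle
  have h0 : (d m : ℝ) ≤ 0 := by
    have hp : (0:ℝ) < 5^(m+1) := by positivity
    by_contra hc
    push_neg at hc
    have : (0:ℝ) < (d m : ℝ)/5^(m+1) := div_pos hc hp
    linarith
  have : (d m : ℕ) = 0 := by exact le_antisymm ((Nat.cast_le (α := ℝ)).mp (by rw [Nat.cast_zero]; exact h0)) (Nat.zero_le _)
  exact Fin.ext this


lemma val_first_diff (d d' : ℕ → Fin 5) (m : ℕ) (hpre : ∀ j < m, d j = d' j)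
    (hlt : (d m : ℕ) < (d' m : ℕ)) (hval : val d = val d') :
    (∀ j, m < j → d j = 4) ∧ (∀ j, m < j → d' j = 0) := by
  have hP : ∑ j ∈ Finset.range m, (d j : ℝ)/5^(j+1)
      = ∑ j ∈ Finset.range m, (d' j : ℝ)/5^(j+1) :=
    Finset.sum_congr rfl (fun j hj => by rw [hpre j (Finset.mem_range.mp hj)])
  have hv := val_prefix d (m+1)
  have hv' := val_prefix d' (m+1)
  rw [Finset.sum_range_succ] at hv hv'
  rw [hval, hv'] at hv
  rw [hP] at hv
  -- hv : stuff
  have hgap : (1:ℝ)/5^(m+1) ≤ ((d' m : ℝ) - (d m : ℝ))/5^(m+1) := by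
    gcongr
    have : (d m : ℕ) + 1 ≤ (d' m : ℕ) := hlt
    have := (Nat.cast_le (α := ℝ)).mpr this
    push_cast at this
    linarith
  have htd := tail_le d (m+1)
  have htd0 := tail_nonneg d (m+1)
  have htd' := tail_le d' (m+1)
  have htd0' := tail_nonneg d' (m+1)
  have h5 : ((1:ℝ)/5)^(m+1) = 1/5^(m+1) := by rw [one_div_pow]
  rw [h5] at htd htd'
  -- deduce tail_d = 5^{-m-1} and tail_d' = 0
  have hgap' : ((d' m : ℝ) - (d m : ℝ))/5^(m+1)
      = (∑' j, (d (j+(m+1)) : ℝ)/5^(j+(m+1)+1)) - ∑' j, (d' (j+(m+1)) : ℝ)/5^(j+(m+1)+1) := by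
    rw [sub_div]
    linarith
  have htde : ∑' j, (d (j+(m+1)) : ℝ)/5^(j+(m+1)+1) = 1/5^(m+1) := by
    linarith
  have htde' : ∑' j, (d' (j+(m+1)) : ℝ)/5^(j+(m+1)+1) = 0 := by
    linarith
  constructor
  · -- d has all-4 tail : val of shifted sequence is 1
    have hshift : val (fun j => d (j+(m+1))) = 1 := by
      rw [val]
      have he : ∀ j : ℕ, ((d (j+(m+1)) : ℝ))/5^(j+1)
          = 5^(m+1) * ((d (j+(m+1)) : ℝ)/5^(j+(m+1)+1)) := by
        intro j
        have h5e : (5:ℝ)^(j+(m+1)+1) = 5^(m+1) * 5^(j+1) := by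
          rw [← pow_add]; congr 1; ring
        rw [h5e]
        have hne : ((5:ℝ)^(j+1)) ≠ 0 := by positivity
        have hne' : ((5:ℝ)^(m+1)) ≠ 0 := by positivity
        field_simp
      simp_rw [he]
      rw [tsum_mul_left, htde]
      field_simp
    intro j hj
    have := val_eq_one _ hshift (j - (m+1))
    rwa [Nat.sub_add_cancel hj] at this
  · have hshift : val (fun j => d' (j+(m+1))) = 0 := by
      rw [val]
      have he : ∀ j : ℕ, ((d' (j+(m+1)) : ℝ))/5^(j+1)
          = 5^(m+1) * ((d' (j+(m+1)) : ℝ)/5^(j+(m+1)+1)) := by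
        intro j
        have h5e : (5:ℝ)^(j+(m+1)+1) = 5^(m+1) * 5^(j+1) := by
          rw [← pow_add]; congr 1; ring
        rw [h5e]
        have hne : ((5:ℝ)^(j+1)) ≠ 0 := by positivity
        have hne' : ((5:ℝ)^(m+1)) ≠ 0 := by positivity
        field_simp
      simp_rw [he]
      rw [tsum_mul_left, htde']
      simp
    intro j hj
    have := val_eq_zero _ hshift (j - (m+1))
    rwa [Nat.sub_add_cancel hj] at this

/-- a sequence with an all-2 tail is the unique expansion of its value -/
lemma val_unique_of_tail2 (d d' : ℕ → Fin 5) (M : ℕ) (h2 : ∀ j, M ≤ j → d j = 2)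
    (hval : val d' = val d) : d' = d := by
  by_contra hne
  have hex : ∃ j, d' j ≠ d j := by
    by_contra hc
    push_neg at hc
    exact hne (funext hc)
  classical
  let m := Nat.find hex
  have hm : d' m ≠ d m := Nat.find_spec hex
  have hpre : ∀ j < m, d' j = d j := fun j hj => by
    by_contra hc
    exact Nat.find_min hex hj hc
  set j0 := max M (m+1) with hj0
  have hj0m : m < j0 := lt_of_lt_of_le (Nat.lt_succ_self m) (le_max_right _ _)
  have hj0M : M ≤ j0 := le_max_left _ _
  have h2j0 : d j0 = 2 := h2 j0 hj0M
  rcases lt_or_gt_of_ne (fun hc : (d' m : ℕ) = (d m : ℕ) => hm (Fin.ext hc)) with hlt | hgt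
  · have := (val_first_diff d' d m hpre hlt hval).2 j0 hj0m
    rw [h2j0] at this
    exact absurd this (by decide)
  · have := (val_first_diff d d' m (fun j hj => (hpre j hj).symm) hgt hval.symm).1 j0 hj0m
    rw [h2j0] at this
    exact absurd this (by decide)


/-! ### Greedy digits of a real number -/

/-- index of the stage-`m` standard base-5 interval containing `x` (clamped) -/
def KK (m : ℕ) (x : ℝ) : ℕ := min ⌊(5:ℝ)^m * max x 0⌋₊ (5^m - 1)

lemma pow5_pos (m : ℕ) : 0 < (5:ℕ)^m := Nat.pow_pos (n := m) (by norm_num)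

lemma KK_zero (x : ℝ) : KK 0 x = 0 := by
  simp [KK]

lemma KK_lt (m : ℕ) (x : ℝ) : KK m x < 5^m :=
  lt_of_le_of_lt (min_le_right _ _) (Nat.sub_lt (pow5_pos m) one_pos)

lemma KK_mono (m : ℕ) {x y : ℝ} (h : x ≤ y) : KK m x ≤ KK m y := by
  refine min_le_min (Nat.floor_mono ?_) le_rfl
  have : max x 0 ≤ max y 0 := max_le_max h le_rfl
  nlinarith [pow_pos (show (0:ℝ) < 5 by norm_num) m]

lemma floor_mul_le (y : ℝ) : 5 * ⌊y⌋₊ ≤ ⌊5 * y⌋₊ := by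
  rcases le_or_gt 0 y with hy | hy
  · refine Nat.le_floor ?_
    push_cast
    nlinarith [Nat.floor_le hy]
  · rw [Nat.floor_of_nonpos hy.le]
    simp

lemma KK_succ_ge (m : ℕ) (x : ℝ) : 5 * KK m x ≤ KK (m+1) x := by
  rcases le_or_gt (⌊(5:ℝ)^m * max x 0⌋₊) (5^m - 1) with hcl | hcl
  · -- unclamped at m
    have h1 : KK m x = ⌊(5:ℝ)^m * max x 0⌋₊ := min_eq_left hcl
    have h2 : 5 * ⌊(5:ℝ)^m * max x 0⌋₊ ≤ ⌊(5:ℝ)^(m+1) * max x 0⌋₊ := by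
      have := floor_mul_le ((5:ℝ)^m * max x 0)
      have he : (5:ℝ) * ((5:ℝ)^m * max x 0) = (5:ℝ)^(m+1) * max x 0 := by ring
      rwa [he] at this
    have h3 : 5 * ⌊(5:ℝ)^m * max x 0⌋₊ ≤ 5^(m+1) - 1 ∨ 5^(m+1) - 1 < 5 * ⌊(5:ℝ)^m * max x 0⌋₊ :=
      le_or_gt _ _
    rw [h1, KK]
    rcases h3 with h3 | h3
    · exact le_min h2 h3
    · -- then floor at m is exactly 5^m - 1 ... anyway 5*(5^m-1) ≤ min
      have h4 : 5 * ⌊(5:ℝ)^m * max x 0⌋₊ ≤ 5 * (5^m - 1) := by omega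
      have h5 : 5 * (5^m - 1) ≤ 5^(m+1) - 1 := by
        have := pow5_pos m
        rw [pow_succ]
        omega
      exact le_min (le_trans (le_trans h4 h5) (Nat.le_of_lt_succ (by omega))) (le_trans h4 h5)
  · -- clamped at m : KK m x = 5^m - 1
    have h1 : KK m x = 5^m - 1 := min_eq_right hcl.le
    have h2 : 5^(m+1) - 1 ≤ ⌊(5:ℝ)^(m+1) * max x 0⌋₊ := by
      have h2' : 5^m ≤ ⌊(5:ℝ)^m * max x 0⌋₊ := by omega
      have h3 : ((5:ℕ)^m : ℝ) ≤ (5:ℝ)^m * max x 0 := by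
        calc ((5:ℕ)^m : ℝ) ≤ (⌊(5:ℝ)^m * max x 0⌋₊ : ℝ) := by exact_mod_cast h2'
          _ ≤ (5:ℝ)^m * max x 0 := Nat.floor_le (by positivity)
      have h4 : (((5:ℕ)^(m+1) : ℕ) : ℝ) ≤ (5:ℝ)^(m+1) * max x 0 := by
        push_cast at h3 ⊢
        rw [pow_succ]
        nlinarith [pow_pos (show (0:ℝ) < 5 by norm_num) m]
      have h5 : (5:ℕ)^(m+1) ≤ ⌊(5:ℝ)^(m+1) * max x 0⌋₊ := Nat.le_floor h4
      omega
    rw [h1, KK]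
    have := pow5_pos m
    rw [min_eq_right h2]
    rw [pow_succ]
    omega

lemma KK_succ_le (m : ℕ) (x : ℝ) : KK (m+1) x ≤ 5 * KK m x + 4 := by
  rcases le_or_gt (⌊(5:ℝ)^m * max x 0⌋₊) (5^m - 1) with hcl | hcl
  · have h1 : KK m x = ⌊(5:ℝ)^m * max x 0⌋₊ := min_eq_left hcl
    rcases le_or_gt (⌊(5:ℝ)^(m+1) * max x 0⌋₊) (5^(m+1) - 1) with hcl' | hcl'
    · have h2 : KK (m+1) x = ⌊(5:ℝ)^(m+1) * max x 0⌋₊ := min_eq_left hcl'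
      rw [h1, h2]
      have h3 : (5:ℝ)^(m+1) * max x 0 < 5 * ⌊(5:ℝ)^m * max x 0⌋₊ + 5 := by
        have := Nat.lt_floor_add_one ((5:ℝ)^m * max x 0)
        have hp : (0:ℝ) < 5 := by norm_num
        rw [pow_succ]
        nlinarith
      have h4 : ⌊(5:ℝ)^(m+1) * max x 0⌋₊ < 5 * ⌊(5:ℝ)^m * max x 0⌋₊ + 5 := by
        by_contra hc
        push_neg at hc
        have : ((5 * ⌊(5:ℝ)^m * max x 0⌋₊ + 5 : ℕ) : ℝ) ≤ (5:ℝ)^(m+1) * max x 0 := by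
          calc ((5 * ⌊(5:ℝ)^m * max x 0⌋₊ + 5 : ℕ) : ℝ) ≤ (⌊(5:ℝ)^(m+1) * max x 0⌋₊ : ℝ) := by
                exact_mod_cast hc
            _ ≤ (5:ℝ)^(m+1) * max x 0 := Nat.floor_le (by positivity)
        push_cast at this
        nlinarith
      omega
    · -- clamped at m+1 : show floor at m ≥ 5^m - 1
      have h2 : KK (m+1) x = 5^(m+1) - 1 := min_eq_right (by omega)
      have h3' : ((5^(m+1) - 1 : ℕ) : ℝ) ≤ (5:ℝ)^(m+1) * max x 0 := by
        calc ((5^(m+1) - 1 : ℕ) : ℝ) ≤ (⌊(5:ℝ)^(m+1) * max x 0⌋₊ : ℝ) := by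
              exact_mod_cast (by omega : 5^(m+1) - 1 ≤ ⌊(5:ℝ)^(m+1) * max x 0⌋₊)
          _ ≤ (5:ℝ)^(m+1) * max x 0 := Nat.floor_le (by positivity)
      have h4 : ((5^m - 1 : ℕ) : ℝ) ≤ (5:ℝ)^m * max x 0 := by
        have hc1 : ((5^(m+1) - 1 : ℕ) : ℝ) = (5:ℝ)^(m+1) - 1 := by
          rw [Nat.cast_sub (pow5_pos (m+1))]
          push_cast
          ring
        have hc2 : ((5^m - 1 : ℕ) : ℝ) = (5:ℝ)^m - 1 := by
          rw [Nat.cast_sub (pow5_pos m)]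
          push_cast
          ring
        rw [hc1, pow_succ] at h3'
        rw [hc2]
        nlinarith
      have h5 : 5^m - 1 ≤ ⌊(5:ℝ)^m * max x 0⌋₊ := Nat.le_floor h4
      rw [h1, h2, pow_succ]
      have := pow5_pos m
      omega
  · have h1 : KK m x = 5^m - 1 := min_eq_right hcl.le
    have := pow5_pos m
    have h2 : KK (m+1) x ≤ 5^(m+1) - 1 := min_le_right _ _
    rw [h1, pow_succ] at *
    omega

/-- greedy digit of `x` at position `m` -/
def dig (m : ℕ) (x : ℝ) : ℕ := KK (m+1) x - 5 * KK m x

lemma dig_lt5 (m : ℕ) (x : ℝ) : dig m x < 5 := by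
  have h1 := KK_succ_ge m x
  have h2 := KK_succ_le m x
  rw [dig]
  omega

lemma dig_cast (m : ℕ) (x : ℝ) : (dig m x : ℝ) = (KK (m+1) x : ℝ) - 5 * KK m x := by
  rw [dig, Nat.cast_sub (KK_succ_ge m x)]
  push_cast
  ring

/-- greedy digit sequence of `x` -/
def digF (x : ℝ) : ℕ → Fin 5 := fun m => ⟨dig m x, dig_lt5 m x⟩

lemma KK_le (m : ℕ) {x : ℝ} (hx0 : 0 ≤ x) (hx1 : x ≤ 1) : (KK m x : ℝ) ≤ 5^m * x := by
  rw [KK, max_eq_left hx0]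
  rcases le_or_gt (⌊(5:ℝ)^m * x⌋₊) (5^m - 1) with hcl | hcl
  · rw [min_eq_left hcl]
    exact Nat.floor_le (by positivity)
  · rw [min_eq_right hcl.le]
    have h1 : ((5^m - 1 : ℕ) : ℝ) = (5:ℝ)^m - 1 := by
      rw [Nat.cast_sub (pow5_pos m)]; push_cast; ring
    rw [h1]
    have h2 : ((5:ℕ)^m : ℝ) ≤ ⌊(5:ℝ)^m * x⌋₊ := by exact_mod_cast (by omega : 5^m ≤ ⌊(5:ℝ)^m * x⌋₊)
    have h3 : (⌊(5:ℝ)^m * x⌋₊ : ℝ) ≤ (5:ℝ)^m * x := Nat.floor_le (by positivity)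
    push_cast at h2
    nlinarith

lemma KK_ge (m : ℕ) {x : ℝ} (hx1 : x ≤ 1) : 5^m * x ≤ (KK m x : ℝ) + 1 := by
  rw [KK]
  rcases le_or_gt (⌊(5:ℝ)^m * max x 0⌋₊) (5^m - 1) with hcl | hcl
  · rw [min_eq_left hcl]
    have h1 : (5:ℝ)^m * max x 0 < ⌊(5:ℝ)^m * max x 0⌋₊ + 1 := Nat.lt_floor_add_one _
    have h2 : (5:ℝ)^m * x ≤ (5:ℝ)^m * max x 0 := by
      have : x ≤ max x 0 := le_max_left _ _
      nlinarith [pow_pos (show (0:ℝ) < 5 by norm_num) m]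
    linarith
  · rw [min_eq_right hcl.le]
    have h1 : ((5^m - 1 : ℕ) : ℝ) = (5:ℝ)^m - 1 := by
      rw [Nat.cast_sub (pow5_pos m)]; push_cast; ring
    rw [h1]
    nlinarith [pow_pos (show (0:ℝ) < 5 by norm_num) m]

lemma telescope (x : ℝ) (m : ℕ) :
    ∑ j ∈ Finset.range m, ((digF x j : ℕ) : ℝ)/5^(j+1) = (KK m x : ℝ)/5^m := by
  induction m with
  | zero => simp [KK_zero]
  | succ m ih =>
    rw [Finset.sum_range_succ, ih]
    have hd : ((digF x m : ℕ) : ℝ) = (KK (m+1) x : ℝ) - 5 * KK m x := dig_cast m x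
    rw [hd]
    have h5 : ((5:ℝ)^(m+1)) = 5^m * 5 := by rw [pow_succ]
    field_simp
    ring

lemma tendsto_KK_div {x : ℝ} (hx0 : 0 ≤ x) (hx1 : x ≤ 1) :
    Filter.Tendsto (fun m => (KK m x : ℝ)/5^m) Filter.atTop (nhds x) := by
  have hb : ∀ m : ℕ, x - (1/5)^m ≤ (KK m x : ℝ)/5^m ∧ (KK m x : ℝ)/5^m ≤ x := by
    intro m
    have hp : (0:ℝ) < 5^m := by positivity
    constructor
    · have h6 := KK_ge m hx1
      have h5 : ((1:ℝ)/5)^m = 1/5^m := one_div_pow 5 m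
      rw [h5, sub_le_iff_le_add, ← add_div, le_div_iff₀ hp]
      nlinarith
    · rw [div_le_iff₀ hp]
      have := KK_le m hx0 hx1
      linarith
  have h1 : Filter.Tendsto (fun m : ℕ => x - (1/5:ℝ)^m) Filter.atTop (nhds (x - 0)) :=
    Filter.Tendsto.const_sub x (tendsto_pow_atTop_nhds_zero_of_lt_one (by norm_num) (by norm_num))
  rw [sub_zero] at h1
  exact tendsto_of_tendsto_of_tendsto_of_le_of_le h1 tendsto_const_nhds
    (fun m => (hb m).1) (fun m => (hb m).2)

/-- the greedy digits of `x ∈ [0,1]` sum to `x` -/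
lemma val_digF {x : ℝ} (hx0 : 0 ≤ x) (hx1 : x ≤ 1) : val (digF x) = x := by
  have hs := (summable_val (digF x)).hasSum
  have h1 := hs.tendsto_sum_nat
  have h2 : Filter.Tendsto (fun m => ∑ j ∈ Finset.range m, ((digF x j : ℕ) : ℝ)/5^(j+1))
      Filter.atTop (nhds x) := by
    have he : (fun m => ∑ j ∈ Finset.range m, ((digF x j : ℕ) : ℝ)/5^(j+1))
        = fun m => (KK m x : ℝ)/5^m := funext (telescope x)
    rw [he]
    exact tendsto_KK_div hx0 hx1
  exact tendsto_nhds_unique h1 h2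

/-! ### The universal meager set -/

/-- digit families that beyond `N` never have all coordinates equal to `2` -/
def SN (n N : ℕ) : Set (Fin n → ℕ → Fin 5) := {d | ∀ m, N ≤ m → ∃ i, d i m ≠ 2}

/-- realize a digit family as a point of the cube -/
def emb (n : ℕ) (d : Fin n → ℕ → Fin 5) : Cube n :=
  fun i => ⟨val (d i), val_nonneg _, val_le_one _⟩

lemma isClosed_SN (n N : ℕ) : IsClosed (SN n N) := by
  have he : SN n N = ⋂ m ∈ {m : ℕ | N ≤ m}, ⋃ i : Fin n, {d : Fin n → ℕ → Fin 5 | d i m ≠ 2} := by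
    ext d
    simp [SN]
  rw [he]
  refine isClosed_biInter (fun m _ => isClosed_iUnion_of_finite (fun i => ?_))
  have : {d : Fin n → ℕ → Fin 5 | d i m ≠ 2} = ((fun d : Fin n → ℕ → Fin 5 => d i m) ⁻¹' {2})ᶜ := by
    ext d; simp
  rw [this]
  exact (IsOpen.preimage ((continuous_apply m).comp (continuous_apply i)) (isOpen_discrete _)).isClosed_compl

lemma continuous_emb (n : ℕ) : Continuous (emb n) := by
  refine continuous_pi (fun i => Continuous.subtype_mk ?_ _)
  refine continuous_tsum (f := fun m (d : Fin n → ℕ → Fin 5) => ((d i m : ℕ) : ℝ)/5^(m+1))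
    (fun m => ?_) summable_bound (fun m d => ?_)
  · exact ((continuous_of_discreteTopology (f := fun v : Fin 5 => ((v : ℕ) : ℝ))).comp
      ((continuous_apply m).comp (continuous_apply i))).div_const _
  · rw [Real.norm_eq_abs, abs_of_nonneg (by positivity)]
    have h4 := digit_le (d i m)
    have hp : (0:ℝ) < 5^(m+1) := by positivity
    exact div_le_div_of_nonneg_right h4 hp.le

/-- the basic closed pieces of the universal set -/
def Aset (n N : ℕ) : Set (Cube n) := emb n '' SN n N

lemma isClosed_Aset (n N : ℕ) : IsClosed (Aset n N) :=
  (((isClosed_SN n N).isCompact).image (continuous_emb n)).isClosed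

lemma mem_unitInterval_coe (t : unitInterval) : 0 ≤ (t:ℝ) ∧ (t:ℝ) ≤ 1 := ⟨t.2.1, t.2.2⟩

lemma isNowhereDense_Aset (n N : ℕ) : IsNowhereDense (Aset n N) := by
  rw [(isClosed_Aset n N).isNowhereDense_iff]
  rw [eq_empty_iff_forall_notMem]
  intro y hy
  rw [mem_interior_iff_mem_nhds, Metric.mem_nhds_iff] at hy
  obtain ⟨ε, hε, hball⟩ := hy
  obtain ⟨M, hM⟩ := exists_pow_lt_of_lt_one hε (show (1:ℝ)/5 < 1 by norm_num)
  -- the perturbed point with all-2 tails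
  set dz : Fin n → ℕ → Fin 5 := fun i m => if m < M then digF ((y i : ℝ)) m else 2 with hdz
  set z : Cube n := fun i => ⟨val (dz i), val_nonneg _, val_le_one _⟩ with hz
  have hzy : z ∈ Metric.ball y ε := by
    rw [Metric.mem_ball]
    rcases Nat.eq_zero_or_pos n with hn | hn
    · have : z = y := by
        funext i
        exact absurd i.2 (by omega)
      rw [this]
      simpa using hε
    · rw [dist_pi_lt_iff hε]
      intro i
      rw [Subtype.dist_eq, Real.dist_eq]
      have h1 : (y i : ℝ) = val (digF ((y i : ℝ))) :=
        (val_digF (y i).2.1 (y i).2.2).symm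
      have h2 : |val (dz i) - val (digF ((y i : ℝ)))| ≤ (1/5)^M := by
        refine val_dist _ _ M (fun j hj => ?_)
        simp [hdz, hj]
      calc |((z i : ℝ)) - (y i : ℝ)| = |val (dz i) - val (digF ((y i : ℝ)))| := by rw [← h1]
        _ ≤ (1/5)^M := h2
        _ < ε := hM
  obtain ⟨d, hdS, hde⟩ := hball hzy
  -- uniqueness of expansions forces d = dz
  have hdd : ∀ i, d i = dz i := by
    intro i
    refine val_unique_of_tail2 (dz i) (d i) M (fun j hj => by simp [hdz, Nat.not_lt.mpr hj]) ?_
    have := congrFun hde i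
    have h1 : val (d i) = (z i : ℝ) := congrArg Subtype.val this
    exact h1
  have := hdS (max M N) (le_max_right _ _)
  obtain ⟨i, hi⟩ := this
  rw [hdd i] at hi
  exact hi (by simp [hdz, Nat.not_lt.mpr (le_max_left M N)])

/-- the universal meager `Fσ` set -/
def Auniv (n : ℕ) : Set (Cube n) := ⋃ N, Aset n N

lemma isMeagre_Auniv (n : ℕ) : IsMeagre (Auniv n) := by
  refine isMeagre_iUnion (fun N => ?_)
  rw [IsMeagre]
  have h := isClosed_isNowhereDense_iff_compl.mp ⟨isClosed_Aset n N, isNowhereDense_Aset n N⟩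
  exact residual_of_dense_open h.1 h.2

lemma isFsigma_Auniv (n : ℕ) : IsFsigma (Auniv n) :=
  ⟨Aset n, isClosed_Aset n, rfl⟩

/-! ### The shrinking lemma -/

lemma shrink {n : ℕ} {G : Set (Cube n)} (hG : IsClosed G) (hd : Dense Gᶜ)
    (M : Type) [Fintype M] (u v : Fin n → M → ℝ)
    (hu0 : ∀ i j, 0 ≤ u i j) (hv1 : ∀ i j, v i j ≤ 1) (huv : ∀ i j, u i j < v i j)
    (ε : ℝ) (hε : 0 < ε) :
    ∃ a b : Fin n → M → ℝ,
      (∀ i j, u i j < a i j ∧ a i j < b i j ∧ b i j < v i j ∧ b i j - a i j ≤ ε) ∧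
      ∀ κ : Fin n → M, ∀ x : Cube n,
        (∀ i, (x i : ℝ) ∈ Icc (a i (κ i)) (b i (κ i))) → x ∉ G := by
  classical
  suffices H : ∀ s : Finset (Fin n → M), ∃ a b : Fin n → M → ℝ,
      (∀ i j, u i j < a i j ∧ a i j < b i j ∧ b i j < v i j ∧ b i j - a i j ≤ ε) ∧
      ∀ κ ∈ s, ∀ x : Cube n,
        (∀ i, (x i : ℝ) ∈ Icc (a i (κ i)) (b i (κ i))) → x ∉ G by
    obtain ⟨a, b, h1, h2⟩ := H Finset.univ
    exact ⟨a, b, h1, fun κ => h2 κ (Finset.mem_univ κ)⟩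
  intro s
  induction s using Finset.induction with
  | empty =>
    refine ⟨fun i j => (u i j + v i j)/2 - min (ε/2) ((v i j - u i j)/4) / 2,
            fun i j => (u i j + v i j)/2 + min (ε/2) ((v i j - u i j)/4) / 2,
            fun i j => ?_, fun κ hκ => absurd hκ (Finset.notMem_empty κ)⟩
    have h1 := huv i j
    have h2 : 0 < min (ε/2) ((v i j - u i j)/4) := lt_min (by linarith) (by linarith)
    have h3 : min (ε/2) ((v i j - u i j)/4) ≤ (v i j - u i j)/4 := min_le_right _ _
    have h4 : min (ε/2) ((v i j - u i j)/4) ≤ ε/2 := min_le_left _ _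
    refine ⟨by linarith, by linarith, by linarith, by linarith⟩
  | insert κ s' hκs ih =>
    obtain ⟨a, b, hab, havoid⟩ := ih
    -- find a point of Gᶜ in the open box for κ
    set U : Set (Cube n) := ⋂ i, {y : Cube n | (y i : ℝ) ∈ Ioo (a i (κ i)) (b i (κ i))} with hU
    have hUopen : IsOpen U :=
      isOpen_iInter_of_finite (fun i =>
        (isOpen_Ioo).preimage (continuous_subtype_val.comp (continuous_apply i)))
    have hmem : ∀ i, (a i (κ i) + b i (κ i))/2 ∈ unitInterval := by
      intro i
      obtain ⟨h1, h2, h3, _⟩ := hab i (κ i)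
      have h4 := hu0 i (κ i)
      have h5 := hv1 i (κ i)
      exact ⟨by linarith, by linarith⟩
    have hUne : U.Nonempty := by
      refine ⟨fun i => ⟨(a i (κ i) + b i (κ i))/2, hmem i⟩, mem_iInter.mpr (fun i => ?_)⟩
      obtain ⟨h1, h2, h3, _⟩ := hab i (κ i)
      exact ⟨by simpa using by linarith, by simpa using by linarith⟩
    obtain ⟨x, hxG, hxU⟩ := hd.exists_mem_open hUopen hUne
    obtain ⟨r, hr, hball⟩ := Metric.isOpen_iff.mp hG.isOpen_compl x hxG
    rw [mem_iInter] at hxU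
    set δ := r/2 with hδ
    have hδ0 : 0 < δ := by positivity
    refine ⟨fun i j => if j = κ i then max (a i j) ((x i : ℝ) - δ) else a i j,
            fun i j => if j = κ i then min (b i j) ((x i : ℝ) + δ) else b i j,
            fun i j => ?_, fun κ' hκ' y hy => ?_⟩
    · obtain ⟨h1, h2, h3, h4⟩ := hab i j
      by_cases hj : j = κ i
      · subst hj
        simp only [if_pos rfl, if_true, eq_self_iff_true]
        have hx1 : a i (κ i) < (x i : ℝ) := (hxU i).1
        have hx2 : (x i : ℝ) < b i (κ i) := (hxU i).2
        refine ⟨lt_max_of_lt_left h1, ?_, ?_, ?_⟩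
        · exact max_lt (lt_min h2 (by linarith)) (lt_min (by linarith) (by linarith))
        · exact lt_of_le_of_lt (min_le_left _ _) h3
        · have h6 := min_le_left (b i (κ i)) ((x i : ℝ) + δ)
          have h8 := min_le_right (b i (κ i)) ((x i : ℝ) + δ)
          rcases le_or_gt (a i (κ i)) ((x i : ℝ) - δ) with hc | hc
          · rw [max_eq_right hc]
            linarith
          · rw [max_eq_left hc.le]
            linarith
      · simp only [if_neg hj]
        exact ⟨h1, h2, h3, h4⟩
    · rcases Finset.mem_insert.mp hκ' with he | hs'
      · -- the new cell : y is within δ of x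
        subst he
        intro hyG
        have hyb : y ∈ Metric.ball x r := by
          rw [Metric.mem_ball]
          have hle : dist y x ≤ δ := by
            rw [dist_pi_le_iff hδ0.le]
            intro i
            have := hy i
            simp only [if_pos rfl, if_true, eq_self_iff_true] at this
            rw [Subtype.dist_eq, Real.dist_eq, abs_le]
            obtain ⟨hyl, hyr⟩ := this
            have h1 := le_max_right (a i (κ' i)) ((x i : ℝ) - δ)
            have h2 := min_le_right (b i (κ' i)) ((x i : ℝ) + δ)
            constructor <;> linarith
          linarith
        exact hball hyb hyG
      · -- an old cell : the new intervals are inside the old ones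
        refine havoid κ' hs' y (fun i => ?_)
        have := hy i
        by_cases hj : κ' i = κ i
        · simp only [if_pos hj] at this
          obtain ⟨hyl, hyr⟩ := this
          have h1 := le_max_left (a i (κ' i)) ((x i : ℝ) - δ)
          have h2 := min_le_left (b i (κ' i)) ((x i : ℝ) + δ)
          exact ⟨le_trans h1 hyl, le_trans hyr h2⟩
        · simp only [if_neg hj] at this
          exact this

/-! ### The recursive partition construction -/

/-- a good stage-`m` partition of each coordinate into `5^m` intervals -/
def goodEP (n m : ℕ) (e : Fin n → ℕ → ℝ) : Prop :=
  (∀ i, e i 0 = 0) ∧ (∀ i j, 5^m ≤ j → e i j = 1) ∧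
  (∀ i j, j < 5^m → e i j < e i (j+1)) ∧
  (∀ i j, e i (j+1) - e i j ≤ (3/4)^m)

lemma goodEP.step_le {n m : ℕ} {e : Fin n → ℕ → ℝ} (he : goodEP n m e) (i : Fin n) (j : ℕ) :
    e i j ≤ e i (j+1) := by
  rcases lt_or_ge j (5^m) with hj | hj
  · exact (he.2.2.1 i j hj).le
  · rw [he.2.1 i j hj, he.2.1 i (j+1) (le_trans hj (Nat.le_succ j))]

lemma goodEP.mono {n m : ℕ} {e : Fin n → ℕ → ℝ} (he : goodEP n m e) (i : Fin n) :
    Monotone (e i) := monotone_nat_of_le_succ (he.step_le i)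

lemma goodEP.nonneg {n m : ℕ} {e : Fin n → ℕ → ℝ} (he : goodEP n m e) (i : Fin n) (j : ℕ) :
    0 ≤ e i j := by
  have := he.mono i (Nat.zero_le j)
  rwa [he.1 i] at this

lemma goodEP.le_one {n m : ℕ} {e : Fin n → ℕ → ℝ} (he : goodEP n m e) (i : Fin n) (j : ℕ) :
    e i j ≤ 1 := by
  rcases le_or_gt (5^m) j with hj | hj
  · rw [he.2.1 i j hj]
  · have := he.mono i hj.le
    rwa [he.2.1 i (5^m) le_rfl] at this


lemma step_exists (n m : ℕ) (G : Set (Cube n)) (hG : IsClosed G) (hd : Dense Gᶜ)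
    (e : Fin n → ℕ → ℝ) (he : goodEP n m e) :
    ∃ e' : Fin n → ℕ → ℝ, goodEP n (m+1) e' ∧ (∀ i j, e' i (5*j) = e i j) ∧
      (∀ κ : Fin n → ℕ, (∀ i, κ i < 5^m) → ∀ x : Cube n,
        (∀ i, (x i : ℝ) ∈ Icc (e' i (5*κ i+2)) (e' i (5*κ i+3))) → x ∉ G) := by
  classical
  obtain ⟨a, b, hab, havoid⟩ := shrink hG hd (Fin (5^m))
    (fun i j => e i j.val) (fun i j => e i (j.val+1))
    (fun i j => he.nonneg i j.val) (fun i j => he.le_one i (j.val+1))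
    (fun i j => he.2.2.1 i j.val j.isLt) ((3/4)^(m+1)) (by positivity)
  set e' : Fin n → ℕ → ℝ := fun i j =>
    if hq : j / 5 < 5^m then
      (if j % 5 = 0 then e i (j/5)
       else if j % 5 = 1 then (e i (j/5) + a i ⟨j/5, hq⟩)/2
       else if j % 5 = 2 then a i ⟨j/5, hq⟩
       else if j % 5 = 3 then b i ⟨j/5, hq⟩
       else (b i ⟨j/5, hq⟩ + e i (j/5+1))/2)
    else 1 with he'
  have hps : (5:ℕ)^(m+1) = 5^m * 5 := pow_succ 5 m
  -- value lemmas
  have hv0 : ∀ i q (hq : q < 5^m), e' i (5*q) = e i q := by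
    intro i q hq
    have h1 : (5*q) / 5 = q := by omega
    have h2 : (5*q) % 5 = 0 := by omega
    simp only [he', h1, h2, dif_pos hq]
    norm_num
  have hv0' : ∀ i j, e' i (5*j) = e i j := by
    intro i j
    rcases lt_or_ge j (5^m) with hj | hj
    · exact hv0 i j hj
    · have h1 : (5*j) / 5 = j := by omega
      have : ¬ ((5*j)/5 < 5^m) := by omega
      simp only [he', dif_neg this]
      rw [he.2.1 i j hj]
  have hv1 : ∀ i q (hq : q < 5^m), e' i (5*q+1) = (e i q + a i ⟨q, hq⟩)/2 := by
    intro i q hq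
    have h1 : (5*q+1) / 5 = q := by omega
    have h2 : (5*q+1) % 5 = 1 := by omega
    simp only [he', h1, h2, dif_pos hq]
    norm_num
  have hv2 : ∀ i q (hq : q < 5^m), e' i (5*q+2) = a i ⟨q, hq⟩ := by
    intro i q hq
    have h1 : (5*q+2) / 5 = q := by omega
    have h2 : (5*q+2) % 5 = 2 := by omega
    simp only [he', h1, h2, dif_pos hq]
    norm_num
  have hv3 : ∀ i q (hq : q < 5^m), e' i (5*q+3) = b i ⟨q, hq⟩ := by
    intro i q hq
    have h1 : (5*q+3) / 5 = q := by omega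
    have h2 : (5*q+3) % 5 = 3 := by omega
    simp only [he', h1, h2, dif_pos hq]
    norm_num
  have hv4 : ∀ i q (hq : q < 5^m), e' i (5*q+4) = (b i ⟨q, hq⟩ + e i (q+1))/2 := by
    intro i q hq
    have h1 : (5*q+4) / 5 = q := by omega
    have h2 : (5*q+4) % 5 = 4 := by omega
    simp only [he', h1, h2, dif_pos hq]
    norm_num
  have hvbig : ∀ i j, 5^(m+1) ≤ j → e' i j = 1 := by
    intro i j hj
    have : ¬ (j/5 < 5^m) := by omega
    simp only [he', dif_neg this]
  refine ⟨e', ⟨fun i => ?_, hvbig, fun i j hj => ?_, fun i j => ?_⟩, hv0', fun κ hκ x hx => ?_⟩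
  · -- e' i 0 = 0
    have := hv0 i 0 (pow5_pos m)
    simpa using this ▸ (he.1 i)
  · -- strict mono below 5^(m+1)
    have hq : j / 5 < 5^m := by omega
    set q := j / 5 with hqd
    have hr : j % 5 < 5 := Nat.mod_lt _ (by norm_num)
    obtain ⟨hlo0, hm1, hm2, _⟩ := hab i ⟨q, hq⟩
    have hlo : e i q < a i ⟨q, hq⟩ := hlo0
    have hhi : b i ⟨q, hq⟩ < e i (q+1) := hm2
    have hr5 : j % 5 = 0 ∨ j % 5 = 1 ∨ j % 5 = 2 ∨ j % 5 = 3 ∨ j % 5 = 4 := by omega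
    rcases hr5 with h | h | h | h | h
    · have h0 : j = 5*q := by omega
      rw [h0, hv0 i q hq, show 5*q+1 = 5*q+1 from rfl, hv1 i q hq]
      linarith
    · have h0 : j = 5*q+1 := by omega
      rw [h0, hv1 i q hq, show 5*q+1+1 = 5*q+2 from rfl, hv2 i q hq]
      linarith
    · have h0 : j = 5*q+2 := by omega
      rw [h0, hv2 i q hq, show 5*q+2+1 = 5*q+3 from rfl, hv3 i q hq]
      exact hm1
    · have h0 : j = 5*q+3 := by omega
      rw [h0, hv3 i q hq, show 5*q+3+1 = 5*q+4 from rfl, hv4 i q hq]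
      linarith
    · have h0 : j = 5*q+4 := by omega
      rw [h0, hv4 i q hq, show 5*q+4+1 = 5*(q+1) from by ring, hv0' i (q+1)]
      rcases lt_or_ge (q+1) (5^m) with hq1 | hq1
      · linarith
      · rw [he.2.1 i (q+1) hq1]
        have hle := he.le_one i (q+1)
        linarith
  · -- gap bound
    rcases le_or_gt (5^(m+1)) j with hbig | hsmall
    · rw [hvbig i j hbig, hvbig i (j+1) (le_trans hbig (Nat.le_succ j))]
      simp
      positivity
    · have hq : j / 5 < 5^m := by omega
      set q := j / 5 with hqd
      obtain ⟨hlo0, hm1, hm2, hm3⟩ := hab i ⟨q, hq⟩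
      have hlo : e i q < a i ⟨q, hq⟩ := hlo0
      have hhi : b i ⟨q, hq⟩ < e i (q+1) := hm2
      have hgap : e i (q+1) - e i q ≤ ((3:ℝ)/4)^m := he.2.2.2 i q
      have hr5 : j % 5 = 0 ∨ j % 5 = 1 ∨ j % 5 = 2 ∨ j % 5 = 3 ∨ j % 5 = 4 := by omega
      have h34 : ((3:ℝ)/4)^(m+1) = (3/4)^m * (3/4) := pow_succ _ _
      have h34p : (0:ℝ) ≤ (3/4)^m := by positivity
      rcases hr5 with h | h | h | h | h
      · have h0 : j = 5*q := by omega
        rw [h0, hv0 i q hq, show 5*q+1 = 5*q+1 from rfl, hv1 i q hq]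
        rw [h34]
        nlinarith
      · have h0 : j = 5*q+1 := by omega
        rw [h0, hv1 i q hq, show 5*q+1+1 = 5*q+2 from rfl, hv2 i q hq]
        rw [h34]
        nlinarith
      · have h0 : j = 5*q+2 := by omega
        rw [h0, hv2 i q hq, show 5*q+2+1 = 5*q+3 from rfl, hv3 i q hq]
        exact hm3
      · have h0 : j = 5*q+3 := by omega
        rw [h0, hv3 i q hq, show 5*q+3+1 = 5*q+4 from rfl, hv4 i q hq]
        rw [h34]
        nlinarith
      · have h0 : j = 5*q+4 := by omega
        rw [h0, hv4 i q hq, show 5*q+4+1 = 5*(q+1) from by ring, hv0' i (q+1)]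
        rw [h34]
        nlinarith
  · -- avoidance
    refine havoid (fun i => ⟨κ i, hκ i⟩) x (fun i => ?_)
    have := hx i
    rwa [hv2 i (κ i) (hκ i), hv3 i (κ i) (hκ i)] at this

/-! ### The chain of partitions -/

def e0 (n : ℕ) : Fin n → ℕ → ℝ := fun _ j => if 1 ≤ j then 1 else 0

lemma goodEP_e0 (n : ℕ) : goodEP n 0 (e0 n) := by
  refine ⟨fun i => by simp [e0], fun i j hj => ?_, fun i j hj => ?_, fun i j => ?_⟩
  · simp only [pow_zero] at hj
    simp [e0, hj]
  · simp only [pow_zero] at hj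
    interval_cases j
    simp [e0]
  · rcases Nat.eq_zero_or_pos j with h | h
    · subst h; simp [e0]
    · have h1 : (1:ℕ) ≤ j := h
      simp [e0, h1, Nat.le_succ_of_le h1]

variable {n : ℕ} (G : ℕ → Set (Cube n)) (hG : ∀ m, IsClosed (G m) ∧ Dense (G m)ᶜ)

noncomputable def epc : ∀ m : ℕ, {e : Fin n → ℕ → ℝ // goodEP n m e}
  | 0 => ⟨e0 n, goodEP_e0 n⟩
  | (m+1) => ⟨Classical.choose (step_exists n m (G m) (hG m).1 (hG m).2
        (epc m).1 (epc m).2),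
      (Classical.choose_spec (step_exists n m (G m) (hG m).1 (hG m).2
        (epc m).1 (epc m).2)).1⟩

noncomputable def ep (m : ℕ) : Fin n → ℕ → ℝ := (epc G hG m).1

lemma ep_good (m : ℕ) : goodEP n m (ep G hG m) := (epc G hG m).2

lemma ep_spec (m : ℕ) :
    (∀ i j, ep G hG (m+1) i (5*j) = ep G hG m i j) ∧
    (∀ κ : Fin n → ℕ, (∀ i, κ i < 5^m) → ∀ x : Cube n,
      (∀ i, (x i : ℝ) ∈ Icc (ep G hG (m+1) i (5*κ i+2)) (ep G hG (m+1) i (5*κ i+3))) →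
        x ∉ G m) := by
  have h := Classical.choose_spec (step_exists n m (G m) (hG m).1 (hG m).2
    (epc G hG m).1 (epc G hG m).2)
  exact ⟨h.2.1, h.2.2⟩

/-! ### The coordinate homeomorphisms -/

noncomputable def phi (i : Fin n) (x : ℝ) : ℝ := ⨆ m, ep G hG m i (KK m x)

variable (i : Fin n) (x : ℝ)

lemma term_nonneg (m : ℕ) : 0 ≤ ep G hG m i (KK m x) := (ep_good G hG m).nonneg i _

lemma term_le_one (m : ℕ) : ep G hG m i (KK m x) ≤ 1 := (ep_good G hG m).le_one i _

lemma term_bdd : BddAbove (range (fun m => ep G hG m i (KK m x))) :=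
  ⟨1, fun z ⟨m, hm⟩ => hm ▸ term_le_one G hG i x m⟩

lemma lo_succ (m : ℕ) : ep G hG m i (KK m x) ≤ ep G hG (m+1) i (KK (m+1) x) := by
  calc ep G hG m i (KK m x) = ep G hG (m+1) i (5 * KK m x) := ((ep_spec G hG m).1 i _).symm
    _ ≤ ep G hG (m+1) i (KK (m+1) x) := (ep_good G hG (m+1)).mono i (KK_succ_ge m x)

lemma lo_mono : Monotone (fun m => ep G hG m i (KK m x)) :=
  monotone_nat_of_le_succ (lo_succ G hG i x)

lemma hi_succ (m : ℕ) : ep G hG (m+1) i (KK (m+1) x + 1) ≤ ep G hG m i (KK m x + 1) := by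
  calc ep G hG (m+1) i (KK (m+1) x + 1) ≤ ep G hG (m+1) i (5 * (KK m x + 1)) := by
        refine (ep_good G hG (m+1)).mono i ?_
        have := KK_succ_le m x
        omega
    _ = ep G hG m i (KK m x + 1) := (ep_spec G hG m).1 i _

lemma hi_anti : Antitone (fun m => ep G hG m i (KK m x + 1)) :=
  antitone_nat_of_succ_le (hi_succ G hG i x)

lemma lo_le_hi (j m : ℕ) : ep G hG j i (KK j x) ≤ ep G hG m i (KK m x + 1) := by
  rcases le_total j m with h | h
  · calc ep G hG j i (KK j x) ≤ ep G hG m i (KK m x) := lo_mono G hG i x h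
      _ ≤ ep G hG m i (KK m x + 1) := (ep_good G hG m).mono i (Nat.le_succ _)
  · calc ep G hG j i (KK j x) ≤ ep G hG j i (KK j x + 1) := (ep_good G hG j).mono i (Nat.le_succ _)
      _ ≤ ep G hG m i (KK m x + 1) := hi_anti G hG i x h

lemma lo_le_phi (m : ℕ) : ep G hG m i (KK m x) ≤ phi G hG i x :=
  le_ciSup (term_bdd G hG i x) m

lemma phi_le_hi (m : ℕ) : phi G hG i x ≤ ep G hG m i (KK m x + 1) :=
  ciSup_le (fun j => lo_le_hi G hG i x j m)

lemma phi_nonneg : 0 ≤ phi G hG i x :=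
  le_trans (term_nonneg G hG i x 0) (lo_le_phi G hG i x 0)

lemma phi_le_one : phi G hG i x ≤ 1 := ciSup_le (term_le_one G hG i x)

lemma phi_mono : Monotone (phi G hG i) := by
  intro x y hxy
  refine ciSup_le (fun m => le_trans ?_ (lo_le_phi G hG i y m))
  exact (ep_good G hG m).mono i (KK_mono m hxy)

lemma phi_zero : phi G hG i 0 = 0 := by
  have h0 : ∀ m : ℕ, KK m 0 = 0 := by
    intro m
    simp [KK]
  have : (fun m => ep G hG m i (KK m 0)) = fun m => 0 := by
    funext m
    rw [h0 m, (ep_good G hG m).1 i]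
  rw [phi, this, ciSup_const]

lemma KK_one (m : ℕ) : KK m 1 = 5^m - 1 := by
  rw [KK]
  have h1 : max (1:ℝ) 0 = 1 := max_eq_left zero_le_one
  rw [h1, mul_one]
  have h2 : ((5:ℝ)^m) = ((5^m : ℕ) : ℝ) := by push_cast; ring
  rw [h2, Nat.floor_natCast]
  have := pow5_pos m
  omega

lemma phi_one : phi G hG i 1 = 1 := by
  refine le_antisymm (phi_le_one G hG i 1) ?_
  by_contra hc
  push_neg at hc
  obtain ⟨m, hm⟩ := exists_pow_lt_of_lt_one (by linarith : (0:ℝ) < 1 - phi G hG i 1)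
    (show (3:ℝ)/4 < 1 by norm_num)
  have hterm : 1 - (3/4)^m ≤ ep G hG m i (KK m 1) := by
    have hgap := (ep_good G hG m).2.2.2 i (5^m - 1)
    have hone : ep G hG m i ((5^m - 1) + 1) = 1 := by
      refine (ep_good G hG m).2.1 i _ ?_
      have := pow5_pos m
      omega
    rw [hone] at hgap
    rw [KK_one]
    linarith
  have := lo_le_phi G hG i 1 m
  linarith

lemma KK_add_one {x y : ℝ} (m : ℕ) (hxy : x ≤ y) (hd : y - x ≤ (1/5)^m) :
    KK m y ≤ KK m x + 1 := by
  have hmax : max y 0 - max x 0 ≤ (1/5)^m := by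
    rcases le_or_gt y 0 with h | h
    · have : max y 0 = 0 := max_eq_right h
      rw [this]
      have : max x 0 ≥ 0 := le_max_right _ _
      have hp : (0:ℝ) < (1/5)^m := by positivity
      linarith
    · have h1 : max y 0 = y := max_eq_left h.le
      have h2 : x ≤ max x 0 := le_max_left _ _
      rw [h1]
      linarith
  have hfl : ⌊(5:ℝ)^m * max y 0⌋₊ ≤ ⌊(5:ℝ)^m * max x 0⌋₊ + 1 := by
    have h5 : (5:ℝ)^m * (1/5)^m = 1 := by
      rw [← mul_pow]
      norm_num
    have h1 : (5:ℝ)^m * max y 0 ≤ (5:ℝ)^m * max x 0 + 1 := by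
      have hp : (0:ℝ) < (5:ℝ)^m := by positivity
      nlinarith [le_max_right x 0, le_max_right y 0]
    calc ⌊(5:ℝ)^m * max y 0⌋₊ ≤ ⌊(5:ℝ)^m * max x 0 + 1⌋₊ := Nat.floor_mono h1
      _ = ⌊(5:ℝ)^m * max x 0⌋₊ + 1 := by
          rw [Nat.floor_add_one (by positivity)]
  rw [KK, KK]
  omega

lemma phi_dist {x y : ℝ} (m : ℕ) (hxy : x ≤ y) (hd : y - x ≤ (1/5)^m) :
    phi G hG i y - phi G hG i x ≤ 2 * (3/4)^m := by
  have hK := KK_add_one m hxy hd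
  have h1 : phi G hG i y ≤ ep G hG m i (KK m x + 2) := by
    calc phi G hG i y ≤ ep G hG m i (KK m y + 1) := phi_le_hi G hG i y m
      _ ≤ ep G hG m i (KK m x + 2) := (ep_good G hG m).mono i (by omega)
  have h2 : ep G hG m i (KK m x) ≤ phi G hG i x := lo_le_phi G hG i x m
  have g1 : ep G hG m i (KK m x + 1) - ep G hG m i (KK m x) ≤ (3/4)^m :=
    (ep_good G hG m).2.2.2 i _
  have g2 : ep G hG m i (KK m x + 2) - ep G hG m i (KK m x + 1) ≤ (3/4)^m := by
    have := (ep_good G hG m).2.2.2 i (KK m x + 1)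
    convert this using 2
  linarith

lemma continuous_phi : Continuous (phi G hG i) := by
  rw [Metric.continuous_iff]
  intro x ε hε
  obtain ⟨m, hm⟩ := exists_pow_lt_of_lt_one (show (0:ℝ) < ε/2 by linarith)
    (show (3:ℝ)/4 < 1 by norm_num)
  refine ⟨(1/5)^m, by positivity, fun y hy => ?_⟩
  rw [Real.dist_eq] at hy ⊢
  have hb : ∀ u v : ℝ, u ≤ v → v - u ≤ (1/5)^m → |phi G hG i v - phi G hG i u| ≤ 2*(3/4)^m := by
    intro u v huv hd
    rw [abs_of_nonneg (by linarith [phi_mono G hG i huv])]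
    exact phi_dist G hG i m huv hd
  have habs := abs_le.mp hy.le
  rcases le_total y x with h | h
  · have := hb y x h (by linarith)
    rw [abs_sub_comm] at this
    linarith
  · have := hb x y h (by linarith)
    linarith

lemma phi_surj {z : ℝ} (hz0 : 0 ≤ z) (hz1 : z ≤ 1) :
    ∃ x, 0 ≤ x ∧ x ≤ 1 ∧ phi G hG i x = z := by
  have him := intermediate_value_Icc (show (0:ℝ) ≤ 1 by norm_num)
    (continuous_phi G hG i).continuousOn
  rw [phi_zero, phi_one] at him
  obtain ⟨x, hx, hfx⟩ := him ⟨hz0, hz1⟩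
  exact ⟨x, hx.1, hx.2, hfx⟩

lemma phi_strictMono {x y : ℝ} (hx0 : 0 ≤ x) (hxy : x < y) (hy1 : y ≤ 1) :
    phi G hG i x < phi G hG i y := by
  obtain ⟨m, hm⟩ := exists_pow_lt_of_lt_one (show (0:ℝ) < (y - x)/3 by linarith)
    (show (1:ℝ)/5 < 1 by norm_num)
  have hy0 : (0:ℝ) ≤ y := le_trans hx0 hxy.le
  have hx1 : x ≤ 1 := le_trans hxy.le hy1
  -- KK m y ≥ KK m x + 2
  have hKK : KK m x + 2 ≤ KK m y := by
    have hp : (0:ℝ) < (5:ℝ)^m := by positivity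
    have h5 : (5:ℝ)^m * (1/5)^m = 1 := by rw [← mul_pow]; norm_num
    have hgap : (5:ℝ)^m * x + 2 < (5:ℝ)^m * y := by nlinarith
    have hmx : max x 0 = x := max_eq_left hx0
    have hmy : max y 0 = y := max_eq_left hy0
    have h1 : ⌊(5:ℝ)^m * x⌋₊ + 2 ≤ ⌊(5:ℝ)^m * y⌋₊ := by
      refine Nat.le_floor ?_
      push_cast
      calc (⌊(5:ℝ)^m * x⌋₊ : ℝ) + 2 ≤ (5:ℝ)^m * x + 2 := by
            linarith [Nat.floor_le (by positivity : (0:ℝ) ≤ (5:ℝ)^m * x)]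
        _ ≤ (5:ℝ)^m * y := hgap.le
    have h2 : ⌊(5:ℝ)^m * x⌋₊ + 2 < 5^m := by
      have hyb : (5:ℝ)^m * y ≤ (5:ℝ)^m := by nlinarith
      have : (⌊(5:ℝ)^m * x⌋₊ : ℝ) + 2 < ((5^m : ℕ) : ℝ) := by
        push_cast
        calc (⌊(5:ℝ)^m * x⌋₊ : ℝ) + 2 ≤ (5:ℝ)^m * x + 2 := by
              linarith [Nat.floor_le (by positivity : (0:ℝ) ≤ (5:ℝ)^m * x)]
          _ < (5:ℝ)^m * y := hgap
          _ ≤ (5:ℝ)^m := hyb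
      exact_mod_cast this
    rw [KK, KK, hmx, hmy]
    omega
  have hKlt := KK_lt m y
  -- strict inequality through the intermediate interval
  have hstep : ep G hG m i (KK m y - 1) < ep G hG m i (KK m y) := by
    have hpos : 1 ≤ KK m y := by omega
    have := (ep_good G hG m).2.2.1 i (KK m y - 1) (by omega)
    have he : KK m y - 1 + 1 = KK m y := by omega
    rwa [he] at this
  calc phi G hG i x ≤ ep G hG m i (KK m x + 1) := phi_le_hi G hG i x m
    _ ≤ ep G hG m i (KK m y - 1) := (ep_good G hG m).mono i (by omega)
    _ < ep G hG m i (KK m y) := hstep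
    _ ≤ phi G hG i y := lo_le_phi G hG i y m

/-! ### The homeomorphism of the cube -/

lemma phiMap_mem (i : Fin n) (t : unitInterval) : phi G hG i (t : ℝ) ∈ unitInterval :=
  ⟨phi_nonneg G hG i _, phi_le_one G hG i _⟩

noncomputable def PhiEquiv (i : Fin n) : unitInterval ≃ unitInterval :=
  Equiv.ofBijective (fun t => ⟨phi G hG i (t : ℝ), phiMap_mem G hG i t⟩) (by
    constructor
    · intro t s hts
      have h := congrArg Subtype.val hts
      simp only at h
      by_contra hne
      have hne' : (t : ℝ) ≠ (s : ℝ) := fun hc => hne (Subtype.ext hc)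
      rcases lt_or_gt_of_ne hne' with hlt | hgt
      · exact absurd h (ne_of_lt (phi_strictMono G hG i t.2.1 hlt s.2.2))
      · exact absurd h.symm (ne_of_lt (phi_strictMono G hG i s.2.1 hgt t.2.2))
    · intro z
      obtain ⟨x, hx0, hx1, hfx⟩ := phi_surj G hG i z.2.1 z.2.2
      exact ⟨⟨x, hx0, hx1⟩, Subtype.ext hfx⟩)

noncomputable def PhiHomeo (i : Fin n) : unitInterval ≃ₜ unitInterval :=
  Continuous.homeoOfEquivCompactToT2 (f := PhiEquiv G hG i)
    (Continuous.subtype_mk ((continuous_phi G hG i).comp continuous_subtype_val) _)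

lemma PhiHomeo_symm_prop (i : Fin n) (t : unitInterval) :
    phi G hG i (((PhiHomeo G hG i).symm t : unitInterval) : ℝ) = (t : ℝ) := by
  have h := (PhiHomeo G hG i).apply_symm_apply t
  exact congrArg Subtype.val h

noncomputable def bigHomeo : Cube n ≃ₜ Cube n :=
  Homeomorph.piCongrRight (fun i => (PhiHomeo G hG i).symm)

/-- the key avoidance property -/
lemma bigHomeo_mem_Auniv (hmono : ∀ k m, k ≤ m → G k ⊆ G m)
    (x : Cube n) (k : ℕ) (hx : x ∈ G k) :
    bigHomeo G hG x ∈ Auniv n := by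
  set y : Cube n := bigHomeo G hG x with hy
  have hyx : ∀ i, phi G hG i ((y i : ℝ)) = (x i : ℝ) := by
    intro i
    have : y i = (PhiHomeo G hG i).symm (x i) := rfl
    rw [this, PhiHomeo_symm_prop]
  refine mem_iUnion.mpr ⟨k, ⟨fun i => digF ((y i : ℝ)), ?_, ?_⟩⟩
  · -- the digit condition
    intro m hmk
    by_contra hc
    push_neg at hc
    have hdig : ∀ i, dig m ((y i : ℝ)) = 2 := by
      intro i
      have := hc i
      have h2 : (digF ((y i : ℝ)) m : ℕ) = ((2 : Fin 5) : ℕ) := congrArg Fin.val this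
      exact h2
    have hKK : ∀ i, KK (m+1) ((y i : ℝ)) = 5 * KK m ((y i : ℝ)) + 2 := by
      intro i
      have h1 := KK_succ_ge m ((y i : ℝ))
      have h2 := hdig i
      rw [dig] at h2
      omega
    have hcell : ∀ i, (x i : ℝ) ∈
        Icc (ep G hG (m+1) i (5 * KK m ((y i : ℝ)) + 2))
            (ep G hG (m+1) i (5 * KK m ((y i : ℝ)) + 3)) := by
      intro i
      constructor
      · have := lo_le_phi G hG i ((y i : ℝ)) (m+1)
        rw [hyx i] at this
        rwa [hKK i] at this
      · have := phi_le_hi G hG i ((y i : ℝ)) (m+1)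
        rw [hyx i] at this
        have he : KK (m+1) ((y i : ℝ)) + 1 = 5 * KK m ((y i : ℝ)) + 3 := by
          rw [hKK i]
        rwa [he] at this
    have hnot := (ep_spec G hG m).2 (fun i => KK m ((y i : ℝ)))
      (fun i => KK_lt m _) x hcell
    exact hnot (hmono k m hmk hx)
  · -- the value condition
    funext i
    exact Subtype.ext (val_digF (y i).2.1 (y i).2.2)

end UMF

/-- For every `n ≥ 1` the cube `Iⁿ` contains a universal meager `Fσ`-set: a meager
`Fσ`-set `A` such that every meager set `B` can be mapped into `A` by a homeomorphism
of `Iⁿ`. -/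
theorem exists_universal_meager_Fsigma_cube (n : ℕ) (hn : 1 ≤ n) :
    ∃ A : Set (Cube n), IsMeagre A ∧ IsFsigma A ∧
      ∀ B : Set (Cube n), IsMeagre B →
        ∃ h : Cube n ≃ₜ Cube n, h '' B ⊆ A := by
  refine ⟨UMF.Auniv n, UMF.isMeagre_Auniv n, UMF.isFsigma_Auniv n, fun B hB => ?_⟩
  obtain ⟨S, hSnwd, hScnt, hSsub⟩ := isMeagre_iff_countable_union_isNowhereDense.mp hB
  obtain ⟨f, hf⟩ := (hScnt.insert ∅).exists_eq_range (insert_nonempty _ _)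
  have hfnwd : ∀ k, IsNowhereDense (f k) := by
    intro k
    have hmem : f k ∈ insert (∅ : Set (Cube n)) S := hf ▸ mem_range_self k
    rcases mem_insert_iff.mp hmem with h | h
    · rw [h]; exact isNowhereDense_empty
    · exact hSnwd _ h
  set G : ℕ → Set (Cube n) :=
    fun m => Nat.rec (closure (f 0)) (fun k Gk => Gk ∪ closure (f (k+1))) m with hGdef
  have hGrec : ∀ m, G (m+1) = G m ∪ closure (f (m+1)) := fun m => rfl
  have hG0 : G 0 = closure (f 0) := rfl
  have hGc : ∀ m, IsClosed (G m) := by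
    intro m; induction m with
    | zero => exact isClosed_closure
    | succ m ih => rw [hGrec]; exact ih.union isClosed_closure
  have hbase : ∀ k, Dense (closure (f k))ᶜ :=
    fun k => (isClosed_isNowhereDense_iff_compl.mp ⟨isClosed_closure, (hfnwd k).closure⟩).2
  have hGd : ∀ m, Dense (G m)ᶜ := by
    intro m
    induction m with
    | zero => rw [hG0]; exact hbase 0
    | succ m ih =>
      rw [hGrec, compl_union]
      exact ih.inter_of_isOpen_left (hbase (m+1)) (hGc m).isOpen_compl
  have hG : ∀ m, IsClosed (G m) ∧ Dense (G m)ᶜ := fun m => ⟨hGc m, hGd m⟩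
  have hmono : ∀ k m, k ≤ m → G k ⊆ G m := by
    intro k m hkm
    induction hkm with
    | refl => exact subset_rfl
    | step h ih =>
      refine subset_trans ih ?_
      rw [hGrec]
      exact subset_union_left
  have hsub : ∀ k, f k ⊆ G k := by
    intro k
    cases k with
    | zero => rw [hG0]; exact subset_closure
    | succ m => rw [hGrec]; exact subset_trans subset_closure subset_union_right
  refine ⟨UMF.bigHomeo G hG, ?_⟩
  rintro y ⟨x, hxB, rfl⟩
  obtain ⟨t, htS, hxt⟩ := hSsub hxB
  obtain ⟨k, hk⟩ : ∃ k, f k = t := by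
    have h1 : t ∈ insert (∅ : Set (Cube n)) S := mem_insert_iff.mpr (Or.inr htS)
    rw [hf] at h1
    exact h1
  exact UMF.bigHomeo_mem_Auniv G hG hmono x k (hsub k (hk ▸ hxt))

end
end

section
/- A subset T of the Hilbert cube I^ω is a tame open set if and only if T = ⋃𝒯 for a suitable tame family 𝒯 of tame open balls in I^ω. -/
open Set Topology

/-- The Hilbert cube `I^ω = ℕ → [0,1]` with the product topology. -/
abbrev HilbertCube : Type := ℕ → unitInterval

/-- A family `ℱ` of subsets of `X` is vanishing if for every open cover `𝒰` of `X`
the subfamily of members of `ℱ` not contained in any element of `𝒰` is locally finite. -/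
def Vanishing {X : Type*} [TopologicalSpace X] (ℱ : Set (Set X)) : Prop :=
  ∀ 𝒰 : Set (Set X), (∀ u ∈ 𝒰, IsOpen u) → ⋃₀ 𝒰 = univ →
    LocallyFinite (fun F : {F : Set X // F ∈ ℱ ∧ ¬∃ u ∈ 𝒰, F ⊆ u} => F.1)

/-- A tame open ball in the Hilbert cube: an open set `B` whose closure has an open
neighborhood `O` such that the pair `(O, closure B)` is homeomorphic to the pair
`(I^ω × [0,∞), I^ω × [0,1])`. -/
def IsTameOpenBall (B : Set HilbertCube) : Prop :=
  IsOpen B ∧ ∃ O : Set HilbertCube, IsOpen O ∧ closure B ⊆ O ∧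
    ∃ e : O ≃ₜ HilbertCube × {t : ℝ // 0 ≤ t},
      ∀ x : O, (x : HilbertCube) ∈ closure B ↔ ((e x).2 : ℝ) ≤ 1

/-- A tame open set: the union of a vanishing family of tame open balls with pairwise
disjoint closures. -/
def IsTameOpen (U : Set HilbertCube) : Prop :=
  ∃ 𝒰 : Set (Set HilbertCube), Vanishing 𝒰 ∧ (∀ B ∈ 𝒰, IsTameOpenBall B) ∧
    (𝒰.Pairwise fun B C => closure B ∩ closure C = ∅) ∧ U = ⋃₀ 𝒰

/-- A tame family: a vanishing family of nonempty open sets such that for any two distinct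
members `U`, `V` either their closures are disjoint, or `closure U ⊆ V`, or `closure V ⊆ U`. -/
def IsTameFamily (𝒯 : Set (Set HilbertCube)) : Prop :=
  Vanishing 𝒯 ∧ (∀ U ∈ 𝒯, U.Nonempty ∧ IsOpen U) ∧
    𝒯.Pairwise fun U V => closure U ∩ closure V = ∅ ∨ closure U ⊆ V ∨ closure V ⊆ U

/-- A tame open ball is nonempty. -/
lemma tameBall_nonempty {B : Set HilbertCube} (h : IsTameOpenBall B) : B.Nonempty := by
  obtain ⟨hB, O, hO, hsub, e, he⟩ := h
  set p : HilbertCube × {t : ℝ // 0 ≤ t} := ((fun _ => 0), ⟨0, le_rfl⟩) with hp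
  have hx : ((e.symm p : O) : HilbertCube) ∈ closure B := by
    apply (he (e.symm p)).2
    rw [Homeomorph.apply_symm_apply]
    norm_num [hp]
  rw [← closure_nonempty_iff]
  exact ⟨_, hx⟩

/-- A subfamily of a vanishing family is vanishing. -/
lemma Vanishing.mono {𝒰 𝒯 : Set (Set HilbertCube)} (h : 𝒰 ⊆ 𝒯) (hv : Vanishing 𝒯) :
    Vanishing 𝒰 := by
  intro 𝒞 hop hcov x
  obtain ⟨N, hN, hfin⟩ := hv 𝒞 hop hcov x
  refine ⟨N, hN, ?_⟩
  have hinj : Function.Injective (fun F : {F : Set HilbertCube // F ∈ 𝒰 ∧ ¬∃ u ∈ 𝒞, F ⊆ u} =>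
      (⟨F.1, h F.2.1, F.2.2⟩ : {F : Set HilbertCube // F ∈ 𝒯 ∧ ¬∃ u ∈ 𝒞, F ⊆ u})) := by
    intro a b hab
    simp only [Subtype.mk.injEq] at hab
    exact Subtype.ext hab
  exact (hfin.preimage hinj.injOn).subset (fun F hF => hF)

/-- A nonempty open subset of the Hilbert cube has two distinct points. -/
lemma exists_two_points {U : Set HilbertCube} (hU : IsOpen U) (hne : U.Nonempty) :
    ∃ a ∈ U, ∃ b ∈ U, a ≠ b := by
  by_contra hcon
  push_neg at hcon
  obtain ⟨a, ha⟩ := hne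
  have hUeq : U = {a} := by
    apply subset_antisymm
    · intro b hb; exact hcon b hb a ha
    · intro b hb; rw [hb]; exact ha
  have hclopen : IsClopen ({a} : Set HilbertCube) := ⟨isClosed_singleton, hUeq ▸ hU⟩
  rcases isClopen_iff.1 hclopen with h0 | huniv
  · exact (singleton_nonempty a).ne_empty h0
  · have h1 : (fun _ => 0 : HilbertCube) = a := by
      have : (fun _ => 0 : HilbertCube) ∈ ({a} : Set HilbertCube) := huniv ▸ mem_univ _
      exact this
    have h2 : (fun _ => 1 : HilbertCube) = a := by
      have : (fun _ => 1 : HilbertCube) ∈ ({a} : Set HilbertCube) := huniv ▸ mem_univ _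
      exact this
    have : (0 : unitInterval) = 1 := by
      have := h1.trans h2.symm
      exact congrFun this 0
    exact zero_ne_one this

/-- A subset of the Hilbert cube is a tame open set if and only if it is the union of a
tame family of tame open balls. -/
theorem tameOpen_iff_union_tameFamily (T : Set HilbertCube) :
    IsTameOpen T ↔ ∃ 𝒯 : Set (Set HilbertCube), IsTameFamily 𝒯 ∧
      (∀ B ∈ 𝒯, IsTameOpenBall B) ∧ T = ⋃₀ 𝒯 := by
  constructor
  · rintro ⟨𝒰, hvan, hball, hdisj, rfl⟩
    exact ⟨𝒰, ⟨hvan, fun U hU => ⟨tameBall_nonempty (hball U hU), (hball U hU).1⟩,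
      fun U hU V hV hUV => Or.inl (hdisj hU hV hUV)⟩, hball, rfl⟩
  · rintro ⟨𝒯, ⟨hvan, hmem, hpair⟩, hball, rfl⟩
    set 𝒰 := {V | V ∈ 𝒯 ∧ ∀ W ∈ 𝒯, W ≠ V → ¬ closure V ⊆ W} with h𝒰
    have hsub : 𝒰 ⊆ 𝒯 := fun V hV => hV.1
    -- every member of 𝒯 is contained in a member of 𝒰
    have key : ∀ U ∈ 𝒯, ∃ V ∈ 𝒰, U ⊆ V := by
      intro U hU
      set S := {V | V ∈ 𝒯 ∧ U ⊆ V} with hS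
      have hUS : U ∈ S := ⟨hU, subset_rfl⟩
      have hUne : U.Nonempty := (hmem U hU).1
      -- S has a maximal element
      have hmax : ∃ V ∈ S, ∀ W ∈ S, ¬ V ⊂ W := by
        by_contra hcon
        push_neg at hcon
        choose f hf1 hf2 using hcon
        let g : ℕ → {V // V ∈ S} := fun n =>
          Nat.rec ⟨U, hUS⟩ (fun _ p => ⟨f p.1 p.2, hf1 p.1 p.2⟩) n
        have hg : ∀ n, (g n).1 ⊂ (g (n+1)).1 := fun n => hf2 _ _
        have hmono : StrictMono (fun n => (g n).1) := strictMono_nat_of_lt_succ hg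
        obtain ⟨a, ha, b, hb, hab⟩ := exists_two_points (hmem U hU).2 hUne
        set 𝒞 : Set (Set HilbertCube) := {{a}ᶜ, {b}ᶜ} with h𝒞
        have hop : ∀ u ∈ 𝒞, IsOpen u := by
          intro u hu
          simp only [h𝒞, mem_insert_iff, mem_singleton_iff] at hu
          rcases hu with rfl | rfl <;> exact isClosed_singleton.isOpen_compl
        have hcov : ⋃₀ 𝒞 = univ := by
          apply eq_univ_of_forall
          intro x
          rcases ne_or_eq x a with hx | rfl
          · exact ⟨{a}ᶜ, by simp [h𝒞], hx⟩
          · exact ⟨{b}ᶜ, by simp [h𝒞], hab⟩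
        obtain ⟨N, hN, hfin⟩ := hvan 𝒞 hop hcov a
        have hmem' : ∀ n, (g n).1 ∈ 𝒯 ∧ ¬∃ u ∈ 𝒞, (g n).1 ⊆ u := by
          intro n
          have hUg : U ⊆ (g n).1 := (g n).2.2
          refine ⟨(g n).2.1, ?_⟩
          rintro ⟨u, hu, hsubu⟩
          simp only [h𝒞, mem_insert_iff, mem_singleton_iff] at hu
          rcases hu with rfl | rfl
          · exact (hsubu (hUg ha)) rfl
          · exact (hsubu (hUg hb)) rfl
        have hinj : Function.Injective (fun n =>
            (⟨(g n).1, hmem' n⟩ : {F : Set HilbertCube // F ∈ 𝒯 ∧ ¬∃ u ∈ 𝒞, F ⊆ u})) := by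
          intro m n h
          simp only [Subtype.mk.injEq] at h
          exact hmono.injective h
        have hinf : {i : {F : Set HilbertCube // F ∈ 𝒯 ∧ ¬∃ u ∈ 𝒞, F ⊆ u} |
            (i.1 ∩ N).Nonempty}.Infinite :=
          Set.infinite_of_injective_forall_mem hinj
            (fun n => ⟨a, (g n).2.2 ha, mem_of_mem_nhds hN⟩)
        exact hinf hfin
      obtain ⟨V, hVS, hVmax⟩ := hmax
      refine ⟨V, ⟨hVS.1, ?_⟩, hVS.2⟩
      intro W hW hWV hclVW
      have hVW : V ⊆ W := subset_closure.trans hclVW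
      have hWS : W ∈ S := ⟨hW, hVS.2.trans hVW⟩
      exact hVmax W hWS ⟨hVW, fun hWV' => hWV (subset_antisymm hWV' hVW)⟩
    refine ⟨𝒰, Vanishing.mono hsub hvan, fun B hB => hball B (hsub hB), ?_, ?_⟩
    · intro V hV W hW hVW
      rcases hpair (hsub hV) (hsub hW) hVW with hd | hcl | hcl
      · exact hd
      · exact absurd hcl (hV.2 W (hsub hW) (Ne.symm hVW))
      · exact absurd hcl (hW.2 V (hsub hV) hVW)
    · apply subset_antisymm
      · intro x hx
        obtain ⟨U, hU, hxU⟩ := hx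
        obtain ⟨V, hV, hUV⟩ := key U hU
        exact ⟨V, hV, hUV hxU⟩
      · exact sUnion_subset_sUnion hsub
end

section
/- Every open subset V of the Hilbert cube I^ω contains a tame open set W ⊆ V that is dense in V. -/
open Set Topology

noncomputable def Complex.abs : AbsoluteValue ℂ ℝ := NormedField.toAbsoluteValue ℂ
lemma Complex.abs_apply' (z : ℂ) : Complex.abs z = ‖z‖ := rfl
@[simp] lemma Complex.abs_ofReal (r : ℝ) : Complex.abs r = |r| := by
  rw [Complex.abs_apply', Complex.norm_real, Real.norm_eq_abs]
lemma Complex.continuous_abs : Continuous Complex.abs := continuous_norm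
lemma Complex.sq_abs (z : ℂ) : Complex.abs z ^ 2 = Complex.normSq z := Complex.sq_norm z
lemma Complex.abs_re_le_abs (z : ℂ) : |z.re| ≤ Complex.abs z := Complex.abs_re_le_norm z
lemma Complex.abs_im_le_abs (z : ℂ) : |z.im| ≤ Complex.abs z := Complex.abs_im_le_norm z
lemma Complex.abs_le_abs_re_add_abs_im (z : ℂ) : Complex.abs z ≤ |z.re| + |z.im| :=
  Complex.norm_le_abs_re_add_abs_im z

noncomputable section
namespace TameProof

/-- sup norm on ℂ -/
def mn (z : ℂ) : ℝ := max |z.re| |z.im|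

lemma mn_nonneg (z : ℂ) : 0 ≤ mn z := le_trans (abs_nonneg _) (le_max_left _ _)

lemma mn_continuous : Continuous mn :=
  (Complex.continuous_re.abs).max (Complex.continuous_im.abs)

lemma mn_zero : mn 0 = 0 := by simp [mn]

lemma mn_eq_zero {z : ℂ} (h : mn z = 0) : z = 0 := by
  have h1 : |z.re| ≤ 0 := h ▸ le_max_left _ _
  have h2 : |z.im| ≤ 0 := h ▸ le_max_right _ _
  have := abs_nonneg z.re; have := abs_nonneg z.im
  apply Complex.ext
  · have := abs_eq_zero.mp (le_antisymm h1 (abs_nonneg _)); simpa using this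
  · have := abs_eq_zero.mp (le_antisymm h2 (abs_nonneg _)); simpa using this

lemma mn_le_abs (z : ℂ) : mn z ≤ Complex.abs z :=
  max_le (Complex.abs_re_le_abs z) (Complex.abs_im_le_abs z)

lemma abs_le_two_mn (z : ℂ) : Complex.abs z ≤ 2 * mn z := by
  calc Complex.abs z ≤ |z.re| + |z.im| := Complex.abs_le_abs_re_add_abs_im z
  _ ≤ mn z + mn z := add_le_add (le_max_left _ _) (le_max_right _ _)
  _ = 2 * mn z := by ring

lemma mn_smul (r : ℝ) (hr : 0 ≤ r) (z : ℂ) : mn ((r:ℂ) * z) = r * mn z := by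
  simp [mn, Complex.mul_re, Complex.mul_im, abs_mul, _root_.abs_of_nonneg hr, mul_max_of_nonneg _ _ hr]


/-- square-to-disk gauge map -/
def gf (z : ℂ) : ℂ := if z = 0 then 0 else ((mn z / Complex.abs z : ℝ) : ℂ) * z

/-- disk-to-square gauge map -/
def gi (w : ℂ) : ℂ := if w = 0 then 0 else ((Complex.abs w / mn w : ℝ) : ℂ) * w

lemma abs_gf (z : ℂ) : Complex.abs (gf z) = mn z := by
  unfold gf
  split
  · simp [*, mn_zero]
  · rename_i h
    have hz : Complex.abs z ≠ 0 := by simpa using h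
    rw [map_mul, Complex.abs_ofReal, _root_.abs_of_nonneg
      (div_nonneg (mn_nonneg z) (Complex.abs.nonneg z))]
    field_simp

lemma mn_gi (w : ℂ) : mn (gi w) = Complex.abs w := by
  unfold gi
  split
  · simp [*, mn_zero]
  · rename_i h
    have hw : mn w ≠ 0 := fun hc => h (mn_eq_zero hc)
    rw [mn_smul _ (div_nonneg (Complex.abs.nonneg w) (mn_nonneg w)) w]
    field_simp
  
lemma gf_ne_zero {z : ℂ} (h : z ≠ 0) : gf z ≠ 0 := by
  intro hc
  have := abs_gf z
  rw [hc] at this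
  exact h (mn_eq_zero (by simpa using this.symm))

lemma gi_ne_zero {w : ℂ} (h : w ≠ 0) : gi w ≠ 0 := by
  intro hc
  have := mn_gi w
  rw [hc, mn_zero] at this
  exact h (by simpa using this.symm)

lemma gi_gf (z : ℂ) : gi (gf z) = z := by
  by_cases h : z = 0
  · simp [h, gf, gi]
  · have h2 : gf z ≠ 0 := gf_ne_zero h
    have hmn : mn z ≠ 0 := fun hc => h (mn_eq_zero hc)
    have habs : Complex.abs z ≠ 0 := by simpa using h
    have hmn' : mn (gf z) = (mn z / Complex.abs z) * mn z := by
      unfold gf; rw [if_neg h, mn_smul _ (div_nonneg (mn_nonneg z) (Complex.abs.nonneg z))]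
    unfold gi
    rw [if_neg h2, abs_gf, hmn']
    unfold gf
    rw [if_neg h]
    rw [← mul_assoc, ← Complex.ofReal_mul]
    have : mn z / (mn z / Complex.abs z * mn z) * (mn z / Complex.abs z) = 1 := by
      field_simp
    rw [this]; simp

lemma gf_gi (w : ℂ) : gf (gi w) = w := by
  by_cases h : w = 0
  · simp [h, gf, gi]
  · have h2 : gi w ≠ 0 := gi_ne_zero h
    have hmn : mn w ≠ 0 := fun hc => h (mn_eq_zero hc)
    have habs : Complex.abs w ≠ 0 := by simpa using h
    have habs' : Complex.abs (gi w) = (Complex.abs w / mn w) * Complex.abs w := by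
      unfold gi; rw [if_neg h, map_mul, Complex.abs_ofReal, _root_.abs_of_nonneg
        (div_nonneg (Complex.abs.nonneg w) ((mn_nonneg w)))]
    unfold gf
    rw [if_neg h2, mn_gi, habs']
    unfold gi
    rw [if_neg h]
    rw [← mul_assoc, ← Complex.ofReal_mul]
    have : Complex.abs w / (Complex.abs w / mn w * Complex.abs w) * (Complex.abs w / mn w) = 1 := by
      field_simp
    rw [this]; simp

lemma gf_continuous : Continuous gf := by
  rw [continuous_iff_continuousAt]
  intro z
  by_cases h : z = 0
  · subst h
    have : Filter.Tendsto gf (𝓝 0) (𝓝 0) := by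
      apply squeeze_zero_norm (a := fun z => ‖z‖)
      · intro z
        show Complex.abs (gf z) ≤ Complex.abs z
        rw [abs_gf]; exact mn_le_abs z
      · simpa using continuous_norm.tendsto (0:ℂ)
    simpa [ContinuousAt, gf] using this
  · have hopen : IsOpen {w : ℂ | w ≠ 0} := isOpen_ne
    apply ContinuousAt.congr (f := fun w => ((mn w / Complex.abs w : ℝ) : ℂ) * w)
    · apply ContinuousAt.mul
      · apply Complex.continuous_ofReal.continuousAt.comp
        exact (mn_continuous.continuousAt).div (Complex.continuous_abs.continuousAt)
          (by simpa using h)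
      · exact continuousAt_id
    · filter_upwards [hopen.mem_nhds h] with w hw
      unfold gf; rw [if_neg hw]

lemma gi_continuous : Continuous gi := by
  rw [continuous_iff_continuousAt]
  intro w
  by_cases h : w = 0
  · subst h
    have : Filter.Tendsto gi (𝓝 0) (𝓝 0) := by
      apply squeeze_zero_norm (a := fun w => 2 * ‖w‖)
      · intro w
        show Complex.abs (gi w) ≤ 2 * Complex.abs w
        by_cases hw : w = 0
        · simp [hw, gi]
        · have hmn : mn w ≠ 0 := fun hc => hw (mn_eq_zero hc)
          unfold gi; rw [if_neg hw, map_mul, Complex.abs_ofReal, _root_.abs_of_nonneg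
            (div_nonneg (Complex.abs.nonneg w) (mn_nonneg w))]
          rw [div_mul_eq_mul_div]
          rw [div_le_iff₀ (lt_of_le_of_ne (mn_nonneg w) (Ne.symm hmn))]
          calc Complex.abs w * Complex.abs w ≤ Complex.abs w * (2 * mn w) := by
                apply mul_le_mul_of_nonneg_left (abs_le_two_mn w) (Complex.abs.nonneg w)
          _ = 2 * Complex.abs w * mn w := by ring
      · have : Filter.Tendsto (fun w : ℂ => ‖w‖) (𝓝 0) (𝓝 0) := by
          simpa using continuous_norm.tendsto (0:ℂ)
        simpa using this.const_mul 2
    simpa [ContinuousAt, gi] using this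
  · have hopen : IsOpen {w : ℂ | w ≠ 0} := isOpen_ne
    apply ContinuousAt.congr (f := fun w => ((Complex.abs w / mn w : ℝ) : ℂ) * w)
    · apply ContinuousAt.mul
      · apply Complex.continuous_ofReal.continuousAt.comp
        apply (Complex.continuous_abs.continuousAt).div (mn_continuous.continuousAt)
        exact fun hc => h (mn_eq_zero hc)
      · exact continuousAt_id
    · filter_upwards [hopen.mem_nhds h] with v hv
      unfold gi; rw [if_neg hv]

/-- the gauge homeomorphism of ℂ -/
def gaugeH : ℂ ≃ₜ ℂ where
  toFun := gf
  invFun := gi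
  left_inv := gi_gf
  right_inv := gf_gi
  continuous_toFun := gf_continuous
  continuous_invFun := gi_continuous


/-- Möbius parameter √2/2 -/
def cc : ℝ := Real.sqrt 2 / 2

lemma cc_pos : 0 < cc := by
  unfold cc; positivity

lemma cc_sq : cc ^ 2 = 1 / 2 := by
  unfold cc
  rw [div_pow, Real.sq_sqrt (by norm_num : (0:ℝ) ≤ 2)]
  norm_num

lemma cc_lt_one : cc < 1 := by
  nlinarith [cc_sq, cc_pos]

/-- the disk set -/
def disk : Set ℂ := {z | Complex.abs z ≤ 1}
/-- the square set -/
def sqr : Set ℂ := {z | mn z ≤ 1}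

def mob (w : ℂ) : ℂ := (w + (cc:ℂ)) / (1 + (cc:ℂ) * w)
def mobInv (w : ℂ) : ℂ := (w - (cc:ℂ)) / (1 - (cc:ℂ) * w)

lemma mob_denom_ne {w : ℂ} (h : Complex.abs w ≤ 1) : (1 + (cc:ℂ) * w) ≠ 0 := by
  intro hc
  have h1 : (cc:ℂ) * w = -1 := by linear_combination hc
  have := congrArg Complex.abs h1
  rw [map_mul, Complex.abs_ofReal, _root_.abs_of_nonneg cc_pos.le] at this
  simp at this
  nlinarith [cc_pos, cc_lt_one, Complex.abs.nonneg w]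

lemma mobInv_denom_ne {w : ℂ} (h : Complex.abs w ≤ 1) : (1 - (cc:ℂ) * w) ≠ 0 := by
  intro hc
  have h1 : (cc:ℂ) * w = 1 := by linear_combination -hc
  have := congrArg Complex.abs h1
  rw [map_mul, Complex.abs_ofReal, _root_.abs_of_nonneg cc_pos.le] at this
  simp at this
  nlinarith [cc_pos, cc_lt_one, Complex.abs.nonneg w]

lemma mob_key_identity (w : ℂ) :
    Complex.normSq (w + (cc:ℂ)) - Complex.normSq (1 + (cc:ℂ) * w)
      = (1 - cc ^ 2) * (Complex.normSq w - 1) := by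
  simp [Complex.normSq_apply, Complex.add_re, Complex.add_im, Complex.mul_re, Complex.mul_im,
    Complex.ofReal_re, Complex.ofReal_im, Complex.one_re, Complex.one_im]
  ring

lemma mobInv_key_identity (w : ℂ) :
    Complex.normSq (w - (cc:ℂ)) - Complex.normSq (1 - (cc:ℂ) * w)
      = (1 - cc ^ 2) * (Complex.normSq w - 1) := by
  simp [Complex.normSq_apply, Complex.sub_re, Complex.sub_im, Complex.mul_re, Complex.mul_im,
    Complex.ofReal_re, Complex.ofReal_im, Complex.one_re, Complex.one_im]
  ring

lemma one_sub_cc_sq_pos : 0 < 1 - cc ^ 2 := by rw [cc_sq]; norm_num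

lemma mob_mem_disk {w : ℂ} (h : Complex.abs w ≤ 1) : Complex.abs (mob w) ≤ 1 := by
  have hd := mob_denom_ne h
  have hD : 0 < Complex.normSq (1 + (cc:ℂ) * w) := Complex.normSq_pos.mpr hd
  have hkey := mob_key_identity w
  have hw : Complex.normSq w ≤ 1 := by
    rw [← Complex.sq_abs]; nlinarith [Complex.abs.nonneg w]
  have h2 : Complex.normSq (w + (cc:ℂ)) ≤ Complex.normSq (1 + (cc:ℂ) * w) := by
    nlinarith [one_sub_cc_sq_pos]
  have : Complex.normSq (mob w) ≤ 1 := by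
    unfold mob
    rw [Complex.normSq_div]
    rw [div_le_one hD]
    exact h2
  rw [← Complex.sq_abs] at this
  nlinarith [Complex.abs.nonneg (mob w)]

lemma mob_circle {w : ℂ} (h : Complex.abs w ≤ 1) :
    Complex.abs (mob w) = 1 ↔ Complex.abs w = 1 := by
  have hd := mob_denom_ne h
  have hD : 0 < Complex.normSq (1 + (cc:ℂ) * w) := Complex.normSq_pos.mpr hd
  have hkey := mob_key_identity w
  have habs : Complex.normSq (mob w) = Complex.normSq (w + (cc:ℂ)) / Complex.normSq (1 + (cc:ℂ) * w) := by
    unfold mob; rw [Complex.normSq_div]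
  constructor
  · intro h1
    have : Complex.normSq (mob w) = 1 := by rw [← Complex.sq_abs, h1]; norm_num
    rw [habs, div_eq_one_iff_eq hD.ne'] at this
    have : Complex.normSq w = 1 := by nlinarith [one_sub_cc_sq_pos]
    rw [← Complex.sq_abs] at this
    nlinarith [Complex.abs.nonneg w]
  · intro h1
    have : Complex.normSq w = 1 := by rw [← Complex.sq_abs, h1]; norm_num
    have h2 : Complex.normSq (mob w) = 1 := by
      rw [habs]
      rw [div_eq_one_iff_eq hD.ne']
      nlinarith [one_sub_cc_sq_pos]
    rw [← Complex.sq_abs] at h2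
    nlinarith [Complex.abs.nonneg (mob w)]

lemma mobInv_mem_disk {w : ℂ} (h : Complex.abs w ≤ 1) : Complex.abs (mobInv w) ≤ 1 := by
  have hd := mobInv_denom_ne h
  have hD : 0 < Complex.normSq (1 - (cc:ℂ) * w) := Complex.normSq_pos.mpr hd
  have hkey := mobInv_key_identity w
  have hw : Complex.normSq w ≤ 1 := by
    rw [← Complex.sq_abs]; nlinarith [Complex.abs.nonneg w]
  have h2 : Complex.normSq (w - (cc:ℂ)) ≤ Complex.normSq (1 - (cc:ℂ) * w) := by
    nlinarith [one_sub_cc_sq_pos]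
  have : Complex.normSq (mobInv w) ≤ 1 := by
    unfold mobInv
    rw [Complex.normSq_div]
    rw [div_le_one hD]
    exact h2
  rw [← Complex.sq_abs] at this
  nlinarith [Complex.abs.nonneg (mobInv w)]

lemma cc_sq_ne : (1:ℂ) - (cc:ℂ)^2 ≠ 0 := by
  have h0 : ((1 - cc^2 : ℝ):ℂ) ≠ 0 := Complex.ofReal_ne_zero.mpr one_sub_cc_sq_pos.ne'
  intro hc; apply h0; rw [← hc]; push_cast; ring

lemma mobInv_mob {w : ℂ} (h : Complex.abs w ≤ 1) : mobInv (mob w) = w := by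
  have hd := mob_denom_ne h
  have hmd : mob w - (cc:ℂ) = (w*(1-(cc:ℂ)^2))/(1+(cc:ℂ)*w) := by
    unfold mob; rw [eq_div_iff hd, sub_mul, div_mul_cancel₀ _ hd]; ring
  have hmd2 : 1 - (cc:ℂ)*mob w = (1-(cc:ℂ)^2)/(1+(cc:ℂ)*w) := by
    unfold mob; field_simp; ring
  unfold mobInv
  rw [hmd, hmd2, div_div_div_cancel_right₀, mul_div_assoc, div_self cc_sq_ne, mul_one]
  exact hd

lemma mob_mobInv {w : ℂ} (h : Complex.abs w ≤ 1) : mob (mobInv w) = w := by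
  have hd := mobInv_denom_ne h
  have hmd : mobInv w + (cc:ℂ) = (w*(1-(cc:ℂ)^2))/(1-(cc:ℂ)*w) := by
    unfold mobInv; rw [eq_div_iff hd, add_mul, div_mul_cancel₀ _ hd]; ring
  have hmd2 : 1 + (cc:ℂ)*mobInv w = (1-(cc:ℂ)^2)/(1-(cc:ℂ)*w) := by
    unfold mobInv; field_simp; ring
  unfold mob
  rw [hmd, hmd2, div_div_div_cancel_right₀, mul_div_assoc, div_self cc_sq_ne, mul_one]
  exact hd

/-- the Möbius homeomorphism of the disk -/
def mobH : ↥disk ≃ₜ ↥disk where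
  toFun w := ⟨mob w.val, mob_mem_disk w.prop⟩
  invFun w := ⟨mobInv w.val, mobInv_mem_disk w.prop⟩
  left_inv w := Subtype.ext (mobInv_mob w.prop)
  right_inv w := Subtype.ext (mob_mobInv w.prop)
  continuous_toFun := by
    apply Continuous.subtype_mk
    apply Continuous.div
    · exact (continuous_subtype_val.add continuous_const)
    · exact (continuous_const.add (continuous_const.mul continuous_subtype_val))
    · exact fun w => mob_denom_ne w.prop
  continuous_invFun := by
    apply Continuous.subtype_mk
    apply Continuous.div
    · exact (continuous_subtype_val.sub continuous_const)
    · exact (continuous_const.sub (continuous_const.mul continuous_subtype_val))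
    · exact fun w => mobInv_denom_ne w.prop


lemma mob_re (w : ℂ) :
    (mob w).re = ((1+cc^2)*w.re + cc*(Complex.normSq w + 1)) / Complex.normSq (1 + (cc:ℂ)*w) := by
  unfold mob
  rw [Complex.div_re, ← add_div]
  congr 1
  simp [Complex.normSq_apply, Complex.add_re, Complex.add_im, Complex.mul_re, Complex.mul_im]
  ring

lemma mob_im (w : ℂ) :
    (mob w).im = ((1-cc^2)*w.im) / Complex.normSq (1 + (cc:ℂ)*w) := by
  unfold mob
  rw [Complex.div_im, div_sub_div_same]
  congr 1
  simp [Complex.normSq_apply, Complex.add_re, Complex.add_im, Complex.mul_re, Complex.mul_im]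
  ring

lemma arc_core {x a s : ℝ} (hs : s^2 = 2) (hs0 : 0 ≤ s) (ha : 0 ≤ a) (hxa : x^2 + a^2 = 1) :
    (-a ≤ x) ↔ (a ≤ 3*x + 2*s) := by
  have hs14 : 1.4 ≤ s := by nlinarith
  have hx1 : x ≤ 1 := by nlinarith
  have hxm : -1 ≤ x := by nlinarith
  have ha1 : a ≤ 1 := by nlinarith
  constructor
  · intro h
    by_cases hx : 0 ≤ x
    · nlinarith
    · push_neg at hx
      by_contra hcon
      push_neg at hcon
      have h1 : 2*s < a - 3*x := by linarith
      have h2 : (0:ℝ) < a - 3*x := by linarith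
      have h8 : 4*s^2 < (a-3*x)^2 := by nlinarith [sq_nonneg (a - 3*x - 2*s)]
      have hxa2 : x^2 ≤ a^2 := by nlinarith [mul_nonneg (neg_nonneg.mpr hx.le) ha]
      nlinarith [mul_nonneg (neg_nonneg.mpr hx.le) ha]
  · intro h
    by_contra hcon
    push_neg at hcon
    have hx0 : x < 0 := lt_of_lt_of_le hcon (by linarith)
    have hab2 : a^2 < x^2 := by
      nlinarith [mul_pos (show (0:ℝ) < -x by linarith) (show (0:ℝ) < -x - a by linarith),
        mul_nonneg ha (show (0:ℝ) ≤ -x - a by linarith)]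
    have h2a : 2*a^2 < 1 := by nlinarith
    have hkey : 8 < (a - 3*x)^2 := by
      nlinarith [mul_nonneg ha (show (0:ℝ) ≤ -x - a by linarith)]
    have hpos : (0:ℝ) < a - 3*x := by linarith
    have hfin : 2*s < a - 3*x := by
      by_contra hle
      push_neg at hle
      nlinarith [mul_le_mul hle hle hpos.le (show (0:ℝ) ≤ 2*s by linarith)]
    linarith

lemma mob_arc {w : ℂ} (hw : Complex.normSq w = 1) :
    (-|w.im| ≤ w.re) ↔ (|(mob w).im| ≤ (mob w).re) := by
  have habs : Complex.abs w = 1 := by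
    rw [← Complex.sq_abs] at hw; nlinarith [Complex.abs.nonneg w]
  have hd := mob_denom_ne habs.le
  have hD : 0 < Complex.normSq (1 + (cc:ℂ)*w) := Complex.normSq_pos.mpr hd
  have hcore := arc_core (x := w.re) (a := |w.im|)
    (Real.sq_sqrt (by norm_num : (0:ℝ) ≤ 2)) (Real.sqrt_nonneg 2) (abs_nonneg _)
    (by rw [_root_.sq_abs]; simpa [Complex.normSq_apply, sq] using hw)
  rw [hcore]
  rw [mob_re, mob_im, hw]
  rw [abs_div, _root_.abs_of_pos hD, abs_mul,
    _root_.abs_of_pos one_sub_cc_sq_pos]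
  rw [div_le_div_iff_of_pos_right hD]
  have hcc2 : cc*(1+1) = Real.sqrt 2 := by unfold cc; ring
  rw [cc_sq, hcc2]
  constructor <;> intro h <;> linarith


lemma gf_mem_sqr_iff (z : ℂ) : z ∈ sqr ↔ gf z ∈ disk := by
  simp only [sqr, disk, mem_setOf_eq, abs_gf]

/-- square to disk -/
def sqrToDisk : ↥sqr ≃ₜ ↥disk := gaugeH.subtype gf_mem_sqr_iff

/-- the square self-homeomorphism -/
def PhiH : ↥sqr ≃ₜ ↥sqr := sqrToDisk.trans (mobH.trans sqrToDisk.symm)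

lemma PhiH_val (z : ↥sqr) : (PhiH z).val = gi (mob (gf z.val)) := rfl

lemma cond3_smul {r : ℝ} (hr : 0 < r) (z : ℂ) :
    (-|((r:ℂ)*z).im| ≤ ((r:ℂ)*z).re) ↔ (-|z.im| ≤ z.re) := by
  simp only [Complex.mul_re, Complex.mul_im, Complex.ofReal_re, Complex.ofReal_im,
    zero_mul, sub_zero, zero_add, add_zero]
  rw [abs_mul, _root_.abs_of_pos hr]
  constructor <;> intro h <;> nlinarith

lemma cond1_smul {r : ℝ} (hr : 0 < r) (z : ℂ) :
    (|((r:ℂ)*z).im| ≤ ((r:ℂ)*z).re) ↔ (|z.im| ≤ z.re) := by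
  simp only [Complex.mul_re, Complex.mul_im, Complex.ofReal_re, Complex.ofReal_im,
    zero_mul, sub_zero, zero_add, add_zero]
  rw [abs_mul, _root_.abs_of_pos hr]
  constructor <;> intro h <;> nlinarith

lemma E1_char {z : ℂ} (hz : z ∈ sqr) : (mn z = 1 ∧ |z.im| ≤ z.re) ↔ z.re = 1 := by
  constructor
  · rintro ⟨h1, h2⟩
    have h0 : 0 ≤ z.re := le_trans (abs_nonneg _) h2
    have hx : |z.re| = z.re := _root_.abs_of_nonneg h0
    have : mn z = z.re := by
      unfold mn; rw [hx]; exact max_eq_left h2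
    linarith [this ▸ h1]
  · intro h
    have hsq : mn z ≤ 1 := hz
    have h2 : |z.im| ≤ 1 := le_trans (le_max_right _ _) hsq
    constructor
    · have : (1:ℝ) ≤ mn z := by
        unfold mn; rw [← h]; exact le_trans (le_abs_self _) (le_max_left _ _)
      linarith
    · rw [h]; exact h2

lemma Phi_prop (z : ↥sqr) :
    (mn z.val = 1 ∧ -|z.val.im| ≤ z.val.re) ↔ ((PhiH z).val.re = 1) := by
  obtain ⟨z, hz⟩ := z
  simp only [PhiH_val]
  have hzd : Complex.abs (gf z) ≤ 1 := by rw [abs_gf]; exact hz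
  constructor
  · rintro ⟨h1, h2⟩
    have hz0 : z ≠ 0 := by intro hc; rw [hc, mn_zero] at h1; norm_num at h1
    have habsz : 0 < Complex.abs z := by simpa [Complex.abs.pos_iff] using hz0
    have hl : 0 < mn z / Complex.abs z := div_pos (h1 ▸ one_pos) habsz
    have hw3 : -|(gf z).im| ≤ (gf z).re := by
      unfold gf; rw [if_neg hz0]; exact (cond3_smul hl z).mpr h2
    have hwabs : Complex.abs (gf z) = 1 := by rw [abs_gf, h1]
    have hwn : Complex.normSq (gf z) = 1 := by
      rw [← Complex.sq_abs, hwabs]; norm_num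
    have hu1 : |(mob (gf z)).im| ≤ (mob (gf z)).re := (mob_arc hwn).mp hw3
    have huabs : Complex.abs (mob (gf z)) = 1 := (mob_circle hzd).mpr hwabs
    have hu0 : mob (gf z) ≠ 0 := by
      intro hc; rw [hc] at huabs; simp at huabs
    have hl' : 0 < Complex.abs (mob (gf z)) / mn (mob (gf z)) := by
      apply div_pos (huabs ▸ one_pos)
      rcases (mn_nonneg (mob (gf z))).lt_or_eq with h | h
      · exact h
      · exact absurd (mn_eq_zero h.symm) hu0
    have hv1 : |(gi (mob (gf z))).im| ≤ (gi (mob (gf z))).re := by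
      unfold gi; rw [if_neg hu0]; exact (cond1_smul hl' _).mpr hu1
    have hvmn : mn (gi (mob (gf z))) = 1 := by rw [mn_gi, huabs]
    exact (E1_char (le_of_eq hvmn)).mp ⟨hvmn, hv1⟩
  · intro h
    have hvsq : gi (mob (gf z)) ∈ sqr := by
      show mn _ ≤ 1
      rw [mn_gi]; exact mob_mem_disk hzd
    obtain ⟨hvmn, hv1⟩ := (E1_char hvsq).mpr h
    have huabs : Complex.abs (mob (gf z)) = 1 := by rw [← mn_gi]; exact hvmn
    have hu0 : mob (gf z) ≠ 0 := by
      intro hc; rw [hc] at huabs; simp at huabs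
    have hl' : 0 < Complex.abs (mob (gf z)) / mn (mob (gf z)) := by
      apply div_pos (huabs ▸ one_pos)
      rcases (mn_nonneg (mob (gf z))).lt_or_eq with h' | h'
      · exact h'
      · exact absurd (mn_eq_zero h'.symm) hu0
    have hu1 : |(mob (gf z)).im| ≤ (mob (gf z)).re := by
      rw [← cond1_smul hl' (mob (gf z))]
      have : gi (mob (gf z)) = ((Complex.abs (mob (gf z)) / mn (mob (gf z)) : ℝ):ℂ) * mob (gf z) := by
        unfold gi; rw [if_neg hu0]
      rw [← this]; exact hv1
    have hwabs : Complex.abs (gf z) = 1 := (mob_circle hzd).mp huabs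
    have hwn : Complex.normSq (gf z) = 1 := by
      rw [← Complex.sq_abs, hwabs]; norm_num
    have hw3 : -|(gf z).im| ≤ (gf z).re := (mob_arc hwn).mpr hu1
    have h1 : mn z = 1 := by rw [← abs_gf]; exact hwabs
    refine ⟨h1, ?_⟩
    have hz0 : z ≠ 0 := by intro hc; rw [hc, mn_zero] at h1; norm_num at h1
    have habsz : 0 < Complex.abs z := by simpa [Complex.abs.pos_iff] using hz0
    have hl : 0 < mn z / Complex.abs z := div_pos (h1 ▸ one_pos) habsz
    rw [← cond3_smul hl z]
    have : gf z = ((mn z / Complex.abs z : ℝ):ℂ) * z := by unfold gf; rw [if_neg hz0]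
    rw [← this]; exact hw3


/-- flatten subtype of subtype -/
def subtypeSubtypeHomeo {X : Type*} [TopologicalSpace X] {p q : X → Prop} {r : X → Prop}
    (h : ∀ x, (p x ∧ q x) ↔ r x) : {y : {x // p x} // q y.val} ≃ₜ {x // r x} where
  toFun y := ⟨y.val.val, (h _).mp ⟨y.val.prop, y.prop⟩⟩
  invFun x := ⟨⟨x.val, ((h _).mpr x.prop).1⟩, ((h _).mpr x.prop).2⟩
  left_inv y := by ext; rfl
  right_inv x := by ext; rfl
  continuous_toFun := Continuous.subtype_mk (continuous_subtype_val.comp continuous_subtype_val) _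
  continuous_invFun := Continuous.subtype_mk (Continuous.subtype_mk continuous_subtype_val _) _

/-- rectangle to product -/
def rectHomeo (s t : Set ℝ) : {z : ℂ // z.re ∈ s ∧ z.im ∈ t} ≃ₜ ↥s × ↥t where
  toFun z := (⟨z.val.re, z.prop.1⟩, ⟨z.val.im, z.prop.2⟩)
  invFun p := ⟨(p.1.val : ℂ) + (p.2.val : ℝ) * Complex.I,
    by simp, by simp⟩
  left_inv z := by
    apply Subtype.ext
    simpa using Complex.re_add_im z.val
  right_inv p := by
    ext
    · simp
    · simp
  continuous_toFun := by
    apply Continuous.prodMk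
    · exact Continuous.subtype_mk (Complex.continuous_re.comp continuous_subtype_val) _
    · exact Continuous.subtype_mk (Complex.continuous_im.comp continuous_subtype_val) _
  continuous_invFun := by
    apply Continuous.subtype_mk
    apply Continuous.add
    · exact Complex.continuous_ofReal.comp (continuous_subtype_val.comp continuous_fst)
    · exact (Complex.continuous_ofReal.comp (continuous_subtype_val.comp continuous_snd)).mul
        continuous_const

lemma setA_iff (z : ℂ) :
    (z ∈ sqr ∧ ¬(mn z = 1 ∧ -|z.im| ≤ z.re)) ↔ (z.re ∈ Ico (-1:ℝ) 1 ∧ z.im ∈ Ioo (-1:ℝ) 1) := by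
  have hre := le_max_left |z.re| |z.im|
  have him := le_max_right |z.re| |z.im|
  constructor
  · rintro ⟨hsq, hE⟩
    have hsq' : mn z ≤ 1 := hsq
    have h1 : |z.re| ≤ 1 := le_trans hre hsq'
    have h2 : |z.im| ≤ 1 := le_trans him hsq'
    rw [abs_le] at h1 h2
    rcases lt_or_eq_of_le hsq' with hlt | heq
    · have hr : |z.re| < 1 := lt_of_le_of_lt hre hlt
      have hi : |z.im| < 1 := lt_of_le_of_lt him hlt
      rw [abs_lt] at hr hi
      exact ⟨⟨h1.1, hr.2⟩, hi.1, hi.2⟩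
    · have hE2 : z.re < -|z.im| := by
        by_contra hc; push_neg at hc; exact hE ⟨heq.symm ▸ rfl, hc⟩
      have hx0 : z.re < 0 := lt_of_lt_of_le hE2 (by simpa using abs_nonneg z.im)
      have hyx : |z.im| < -z.re := by linarith
      have habs : |z.re| = -z.re := abs_of_neg hx0
      have hmx : mn z = |z.re| := max_eq_left (by linarith)
      have hx1 : z.re = -1 := by
        rw [hmx, habs] at heq; linarith
      have hy1 : |z.im| < 1 := by rw [hx1] at hyx; linarith
      rw [abs_lt] at hy1
      exact ⟨⟨h1.1, by rw [hx1]; norm_num⟩, hy1.1, hy1.2⟩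
  · rintro ⟨⟨ha, hb⟩, hc, hd⟩
    constructor
    · show mn z ≤ 1
      apply max_le
      · rw [abs_le]; exact ⟨ha, hb.le⟩
      · rw [abs_le]; exact ⟨hc.le, hd.le⟩
    · rintro ⟨h1, h2⟩
      have hi : |z.im| < 1 := by rw [abs_lt]; exact ⟨hc, hd⟩
      have : mn z = |z.re| := by
        unfold mn at h1 ⊢
        rcases max_cases |z.re| |z.im| with ⟨he, _⟩ | ⟨he, hlt⟩
        · exact he
        · rw [he] at h1 ⊢; linarith
      rw [this] at h1
      have hxneg : z.re = -1 := by
        rcases abs_eq (by norm_num : (0:ℝ) ≤ 1) |>.mp h1 with h | h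
        · exact absurd h (by linarith)
        · exact h
      rw [hxneg] at h2
      have : |z.im| ≤ -(-1) := by linarith [neg_le_neg h2]
      simp at this
      linarith [abs_lt.mpr ⟨hc, hd⟩]

lemma setB_iff (z : ℂ) :
    (z ∈ sqr ∧ ¬(z.re = 1)) ↔ (z.re ∈ Ico (-1:ℝ) 1 ∧ z.im ∈ Icc (-1:ℝ) 1) := by
  constructor
  · rintro ⟨hsq, hE⟩
    have hsq' : mn z ≤ 1 := hsq
    have h1 : |z.re| ≤ 1 := le_trans (le_max_left _ _) hsq'
    have h2 : |z.im| ≤ 1 := le_trans (le_max_right _ _) hsq'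
    rw [abs_le] at h1 h2
    exact ⟨⟨h1.1, lt_of_le_of_ne h1.2 hE⟩, h2.1, h2.2⟩
  · rintro ⟨⟨ha, hb⟩, hc, hd⟩
    refine ⟨max_le (abs_le.mpr ⟨ha, hb.le⟩) (abs_le.mpr ⟨hc, hd⟩), by intro h; linarith⟩


/-- rescale [0,1) to [-1,1) -/
def rIco : ↥(Ico (0:ℝ) 1) ≃ₜ ↥(Ico (-1:ℝ) 1) :=
  (affineHomeomorph (2:ℝ) (-1) two_ne_zero).subtype (fun x => by
    simp only [affineHomeomorph_apply, mem_Ico]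
    constructor <;> intro h <;> constructor <;> linarith [h.1, h.2])

/-- rescale (0,1) to (-1,1) -/
def rIoo : ↥(Ioo (0:ℝ) 1) ≃ₜ ↥(Ioo (-1:ℝ) 1) :=
  (affineHomeomorph (2:ℝ) (-1) two_ne_zero).subtype (fun x => by
    simp only [affineHomeomorph_apply, mem_Ioo]
    constructor <;> intro h <;> constructor <;> linarith [h.1, h.2])

/-- rescale [0,1] to [-1,1] -/
def rIcc : ↥(Icc (0:ℝ) 1) ≃ₜ ↥(Icc (-1:ℝ) 1) :=
  (affineHomeomorph (2:ℝ) (-1) two_ne_zero).subtype (fun x => by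
    simp only [affineHomeomorph_apply, mem_Icc]
    constructor <;> intro h <;> constructor <;> linarith [h.1, h.2])

/-- THE key two-dimensional homeomorphism -/
def keyH : (↥(Ico (0:ℝ) 1) × ↥(Ioo (0:ℝ) 1)) ≃ₜ (↥(Ico (0:ℝ) 1) × ↥(Icc (0:ℝ) 1)) :=
  (rIco.prodCongr rIoo).trans <|
  (rectHomeo (Ico (-1) 1) (Ioo (-1) 1)).symm.trans <|
  (subtypeSubtypeHomeo setA_iff).symm.trans <|
  (PhiH.subtype (p := fun z : ↥sqr => ¬(mn z.val = 1 ∧ -|z.val.im| ≤ z.val.re))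
    (q := fun z : ↥sqr => ¬(z.val.re = 1)) (fun z => not_congr (Phi_prop z))).trans <|
  (subtypeSubtypeHomeo setB_iff).trans <|
  (rectHomeo (Ico (-1) 1) (Icc (-1) 1)).trans
  (rIco.symm.prodCongr rIcc.symm)


/-! ### Hilbert cube machinery -/

abbrev Q' : Type := ℕ → unitInterval

/-- consume one interval factor -/
def qSplit : Q' ≃ₜ (unitInterval × Q') where
  toFun x := (x 0, fun k => x (k+1))
  invFun p := fun m => Nat.casesOn m p.1 (fun k => p.2 k)
  left_inv x := by funext m; cases m <;> rfl
  right_inv p := by ext <;> rfl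
  continuous_toFun := by
    apply Continuous.prodMk
    · exact continuous_apply 0
    · exact continuous_pi fun k => continuous_apply (k+1)
  continuous_invFun := by
    apply continuous_pi
    intro m
    cases m with
    | zero => exact continuous_fst
    | succ k => exact (continuous_apply k).comp continuous_snd

/-- split off the first N coordinates -/
def qSplitN (N : ℕ) : Q' ≃ₜ ((Fin N → unitInterval) × Q') where
  toFun x := (fun i => x i.val, fun k => x (N+k))
  invFun p := fun m => if h : m < N then p.1 ⟨m, h⟩ else p.2 (m - N)
  left_inv x := by
    funext m
    by_cases h : m < N
    · simp [h]
    · simp only [dif_neg h]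
      congr 1
      omega
  right_inv p := by
    refine Prod.ext ?_ ?_
    · funext i; simp [i.isLt]
    · funext k
      have h : ¬(N + k < N) := by omega
      simp only [dif_neg h, Nat.add_sub_cancel_left]
  continuous_toFun := by
    apply Continuous.prodMk
    · exact continuous_pi fun i => continuous_apply _
    · exact continuous_pi fun k => continuous_apply _
  continuous_invFun := by
    apply continuous_pi
    intro m
    by_cases h : m < N
    · simp only [dif_pos h]
      exact (continuous_apply _).comp continuous_fst
    · simp only [dif_neg h]
      exact (continuous_apply _).comp continuous_snd

/-- split off the last coordinate of a finite product -/
def finSplit (X : Type*) [TopologicalSpace X] (n : ℕ) :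
    (Fin (n+1) → X) ≃ₜ ((Fin n → X) × X) where
  toFun q := (fun i => q i.castSucc, q (Fin.last n))
  invFun p := Fin.lastCases p.2 p.1
  left_inv q := by
    funext i
    refine Fin.lastCases ?_ ?_ i
    · exact Fin.lastCases_last
    · intro j; exact Fin.lastCases_castSucc j
  right_inv p := by
    refine Prod.ext ?_ ?_
    · funext i; simp [Fin.lastCases_castSucc]
    · simp [Fin.lastCases_last]
  continuous_toFun := by
    apply Continuous.prodMk
    · exact continuous_pi fun i => continuous_apply _
    · exact continuous_apply _
  continuous_invFun := by
    apply continuous_pi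
    intro i
    refine Fin.lastCases ?_ ?_ i
    · simp only [Fin.lastCases_last]
      exact continuous_snd
    · intro j
      simp only [Fin.lastCases_castSucc]
      exact (continuous_apply _).comp continuous_fst

/-- empty pi -/
def piEmptyH (X : Type*) [TopologicalSpace X] : (Fin 0 → X) ≃ₜ PUnit.{1} where
  toFun _ := PUnit.unit
  invFun _ := fun i => i.elim0
  left_inv x := by funext i; exact i.elim0
  right_inv p := rfl
  continuous_toFun := continuous_const
  continuous_invFun := continuous_pi fun i => i.elim0

/-- subtype of pi vs pi of subtypes -/
def piSubtypeHomeo {ι : Type*} {π : ι → Type*} [∀ i, TopologicalSpace (π i)]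
    (p : ∀ i, π i → Prop) :
    {f : ∀ i, π i // ∀ i, p i (f i)} ≃ₜ (∀ i, {x : π i // p i x}) where
  toFun f i := ⟨f.val i, f.prop i⟩
  invFun g := ⟨fun i => (g i).val, fun i => (g i).prop⟩
  left_inv f := by ext; rfl
  right_inv g := by ext; rfl
  continuous_toFun := continuous_pi fun i =>
    Continuous.subtype_mk ((continuous_apply i).comp continuous_subtype_val) _
  continuous_invFun :=
    Continuous.subtype_mk (continuous_pi fun i => continuous_subtype_val.comp (continuous_apply i)) _

/-- preimage homeomorphism -/
def preimageHomeo {X Y : Type*} [TopologicalSpace X] [TopologicalSpace Y]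
    (e : X ≃ₜ Y) (s : Set Y) : ↥(⇑e ⁻¹' s) ≃ₜ ↥s :=
  e.subtype (fun _ => Iff.rfl)

/-- `[0,1) ≃ₜ [0,∞)` -/
def icoToIci : ↥(Ico (0:ℝ) 1) ≃ₜ {t : ℝ // 0 ≤ t} where
  toFun t := ⟨t.val / (1 - t.val), div_nonneg t.prop.1 (by linarith [t.prop.2])⟩
  invFun s := ⟨s.val / (1 + s.val), ⟨div_nonneg s.prop (by linarith [s.prop]),
    by rw [div_lt_one (by linarith [s.prop])]; linarith [s.prop]⟩⟩
  left_inv t := by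
    apply Subtype.ext
    have h1 : (1:ℝ) - t.val ≠ 0 := by have := t.prop.2; intro hc; linarith
    show t.val / (1 - t.val) / (1 + t.val / (1 - t.val)) = t.val
    field_simp
    ring
  right_inv s := by
    apply Subtype.ext
    have h1 : (1:ℝ) + s.val ≠ 0 := by have := s.prop; intro hc; linarith
    show s.val / (1 + s.val) / (1 - s.val / (1 + s.val)) = s.val
    field_simp
    ring
  continuous_toFun := by
    apply Continuous.subtype_mk
    apply Continuous.div (continuous_subtype_val)
      (continuous_const.sub continuous_subtype_val)
    intro t; have := t.prop.2; intro hc; simp only [Pi.sub_apply] at hc; linarith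
  continuous_invFun := by
    apply Continuous.subtype_mk
    apply Continuous.div (continuous_subtype_val)
      (continuous_const.add continuous_subtype_val)
    intro s; have := s.prop; intro hc; simp only [Pi.add_apply] at hc; linarith

/-- absorb a closed interval factor into the Hilbert cube -/
def absorbI : (↥(Icc (0:ℝ) 1) × Q') ≃ₜ Q' := qSplit.symm

lemma unitInterval_eq : unitInterval = Icc (0:ℝ) 1 := rfl

/-- the absorption loop -/
def absorbLoop : ∀ n : ℕ,
    ((Fin n → ↥(Ioo (0:ℝ) 1)) × (↥(Ico (0:ℝ) 1) × Q')) ≃ₜ (↥(Ico (0:ℝ) 1) × Q')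
  | 0 => ((piEmptyH _).prodCongr (Homeomorph.refl _)).trans (Homeomorph.punitProd _)
  | (n+1) =>
    ((finSplit _ n).prodCongr (Homeomorph.refl _)).trans <|
    (Homeomorph.prodAssoc _ _ _).trans <|
    ((Homeomorph.refl _).prodCongr
      ((Homeomorph.prodAssoc _ _ _).symm.trans <|
       ((Homeomorph.prodComm _ _).prodCongr (Homeomorph.refl _)).trans <|
       ((keyH).prodCongr (Homeomorph.refl _)).trans <|
       (Homeomorph.prodAssoc _ _ _).trans <|
       ((Homeomorph.refl _).prodCongr absorbI))).trans <|
    absorbLoop n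


section Bump

variable {n : ℕ} (c d : Fin n → ℝ)

/-- bump function -/
def g (y : Fin n → unitInterval) : ℝ :=
  (1/2) * ∏ i, max 0 (min ((y i : ℝ) - c i) (d i - (y i : ℝ)))

lemma g_cont : Continuous (g c d) := by
  apply Continuous.mul continuous_const
  apply continuous_finset_prod
  intro i _
  apply Continuous.max continuous_const
  apply Continuous.min
  · exact (continuous_subtype_val.comp (continuous_apply i)).sub continuous_const
  · exact continuous_const.sub (continuous_subtype_val.comp (continuous_apply i))

lemma g_nonneg (y : Fin n → unitInterval) : 0 ≤ g c d y := by
  apply mul_nonneg (by norm_num)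
  apply Finset.prod_nonneg
  intro i _
  exact le_max_left _ _

lemma g_le_half (hd : ∀ i, d i < 1) (y : Fin n → unitInterval) : g c d y ≤ 1/2 := by
  unfold g
  have h1 : ∏ i, max 0 (min ((y i : ℝ) - c i) (d i - (y i : ℝ))) ≤ 1 := by
    apply Finset.prod_le_one
    · intro i _; exact le_max_left _ _
    · intro i _
      apply max_le (by norm_num)
      apply le_trans (min_le_right _ _)
      have := (y i).prop.1
      have := hd i
      linarith
  nlinarith [h1]

lemma g_pos_iff (y : Fin n → unitInterval) :
    0 < g c d y ↔ ∀ i, c i < (y i : ℝ) ∧ (y i : ℝ) < d i := by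
  constructor
  · intro h i
    by_contra hcon
    have hfac : max 0 (min ((y i : ℝ) - c i) (d i - (y i : ℝ))) = 0 := by
      push_neg at hcon
      rcases le_or_gt ((y i : ℝ)) (c i) with h' | h'
      · apply max_eq_left
        exact le_trans (min_le_left _ _) (by linarith)
      · apply max_eq_left
        exact le_trans (min_le_right _ _) (by linarith [hcon h'])
    have : (∏ i, max 0 (min ((y i : ℝ) - c i) (d i - (y i : ℝ)))) = 0 :=
      Finset.prod_eq_zero (Finset.mem_univ i) hfac
    unfold g at h
    rw [this] at h
    norm_num at h
  · intro h
    apply mul_pos (by norm_num)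
    apply Finset.prod_pos
    intro i _
    have := (h i).1
    have := (h i).2
    apply lt_max_of_lt_right
    apply lt_min <;> linarith

/-- the tame-ball neighborhood -/
def Oset : Set Q' := {x | (x n : ℝ) < g c d (fun i => x i.val)}

lemma Oset_open : IsOpen (Oset c d) := by
  apply isOpen_lt
  · exact continuous_subtype_val.comp (continuous_apply n)
  · exact (g_cont c d).comp (continuous_pi fun i => continuous_apply i.val)

lemma Oset_base {x : Q'} (hx : x ∈ Oset c d) (i : Fin n) :
    c i < (x i.val : ℝ) ∧ (x i.val : ℝ) < d i := by
  have h0 : (0:ℝ) ≤ (x n : ℝ) := (x n).prop.1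
  have := (g_pos_iff c d (fun i => x i.val)).mp (lt_of_le_of_lt h0 hx)
  exact this i

/-- the middle slice set in `(Fin n → I) × I` -/
def S2 : Set ((Fin n → unitInterval) × unitInterval) := {p | (p.2 : ℝ) < g c d p.1}

/-- the base box -/
def Box : Set (Fin n → unitInterval) := {y | ∀ i, c i < (y i : ℝ) ∧ (y i : ℝ) < d i}

lemma Oset_eq : Oset c d =
    ⇑(qSplitN (n+1)) ⁻¹' (((⇑(finSplit unitInterval n)) ⁻¹' (S2 c d)) ×ˢ (univ : Set Q')) := by
  ext x
  simp only [Oset, S2, qSplitN, finSplit, mem_preimage, mem_prod, mem_univ, and_true,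
    mem_setOf_eq, Homeomorph.homeomorph_mk_coe, Equiv.coe_fn_mk]
  rfl

/-- division by `g` homeomorphism -/
def divHomeo (hd : ∀ i, d i < 1) : ↥(S2 c d) ≃ₜ (↥(Box c d) × ↥(Ico (0:ℝ) 1)) where
  toFun p :=
    have hg : 0 < g c d p.val.1 := lt_of_le_of_lt (p.val.2).prop.1 p.prop
    (⟨p.val.1, (g_pos_iff c d _).mp hg⟩,
     ⟨(p.val.2 : ℝ) / g c d p.val.1,
      div_nonneg (p.val.2).prop.1 hg.le,
      by rw [div_lt_one hg]; exact p.prop⟩)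
  invFun q :=
    have hg : 0 < g c d q.1.val := (g_pos_iff c d _).mpr q.1.prop
    ⟨(q.1.val, ⟨q.2.val * g c d q.1.val,
      mul_nonneg q.2.prop.1 hg.le,
      le_trans (le_of_lt (by nlinarith [q.2.prop.2, g_le_half c d hd q.1.val, q.2.prop.1]))
        (by norm_num : (1:ℝ)/2 ≤ 1)⟩),
     by
      show (q.2.val * g c d q.1.val : ℝ) < g c d q.1.val
      nlinarith [q.2.prop.2, q.2.prop.1]⟩
  left_inv p := by
    apply Subtype.ext
    have hg : 0 < g c d p.val.1 := lt_of_le_of_lt (p.val.2).prop.1 p.prop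
    refine Prod.ext rfl (Subtype.ext ?_)
    show (p.val.2 : ℝ) / g c d p.val.1 * g c d p.val.1 = (p.val.2 : ℝ)
    field_simp
  right_inv q := by
    have hg : 0 < g c d q.1.val := (g_pos_iff c d _).mpr q.1.prop
    refine Prod.ext (Subtype.ext rfl) (Subtype.ext ?_)
    show q.2.val * g c d q.1.val / g c d q.1.val = q.2.val
    field_simp
  continuous_toFun := by
    apply Continuous.prodMk
    · exact Continuous.subtype_mk ((continuous_fst.comp continuous_subtype_val)) _
    · apply Continuous.subtype_mk
      apply Continuous.div
      · exact continuous_subtype_val.comp (continuous_snd.comp continuous_subtype_val)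
      · exact (g_cont c d).comp (continuous_fst.comp continuous_subtype_val)
      · intro p
        exact (lt_of_le_of_lt (p.val.2).prop.1 p.prop).ne'
  continuous_invFun := by
    apply Continuous.subtype_mk
    apply Continuous.prodMk
    · exact continuous_subtype_val.comp continuous_fst
    · apply Continuous.subtype_mk
      apply Continuous.mul
      · exact continuous_subtype_val.comp continuous_snd
      · exact (g_cont c d).comp (continuous_subtype_val.comp continuous_fst)

/-- interval subtype homeo -/
def ivlHomeo (hc : ∀ i, 0 < c i) (hcd : ∀ i, c i < d i) (hd : ∀ i, d i < 1) (i : Fin n) :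
    {t : unitInterval // c i < (t : ℝ) ∧ (t : ℝ) < d i} ≃ₜ ↥(Ioo (0:ℝ) 1) where
  toFun t := ⟨((t.val : ℝ) - c i) / (d i - c i),
    div_pos (by linarith [t.prop.1]) (by linarith [hcd i]),
    by rw [div_lt_one (by linarith [hcd i])]; linarith [t.prop.2]⟩
  invFun u := ⟨⟨c i + u.val * (d i - c i),
      by
        have hu := u.prop
        simp only [mem_Ioo] at hu
        constructor
        · nlinarith [hc i, hcd i, hu.1]
        · nlinarith [hd i, hcd i, hu.2]⟩,
      by
        have hu := u.prop
        simp only [mem_Ioo] at hu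
        constructor
        · show c i < c i + u.val * (d i - c i)
          nlinarith [hcd i, hu.1]
        · show c i + u.val * (d i - c i) < d i
          nlinarith [hcd i, hu.2]⟩
  left_inv t := by
    apply Subtype.ext
    apply Subtype.ext
    show c i + ((t.val:ℝ) - c i) / (d i - c i) * (d i - c i) = (t.val : ℝ)
    have : d i - c i ≠ 0 := by linarith [hcd i]
    field_simp
    ring
  right_inv u := by
    apply Subtype.ext
    show (c i + u.val * (d i - c i) - c i) / (d i - c i) = u.val
    have : d i - c i ≠ 0 := by linarith [hcd i]
    field_simp
    ring
  continuous_toFun := by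
    apply Continuous.subtype_mk
    apply Continuous.div_const
    exact (continuous_subtype_val.comp continuous_subtype_val).sub continuous_const
  continuous_invFun := by
    apply Continuous.subtype_mk
    apply Continuous.subtype_mk
    exact continuous_const.add (continuous_subtype_val.mul continuous_const)

/-- the full homeomorphism for the tame ball -/
def ballHomeo (hc : ∀ i, 0 < c i) (hcd : ∀ i, c i < d i) (hd : ∀ i, d i < 1) :
    ↥(Oset c d) ≃ₜ (Q' × {t : ℝ // 0 ≤ t}) :=
  (Homeomorph.setCongr (Oset_eq c d)).trans <|
  (preimageHomeo (qSplitN (n+1)) _).trans <|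
  (Homeomorph.Set.prod _ _).trans <|
  ((preimageHomeo (finSplit unitInterval n) (S2 c d)).prodCongr (Homeomorph.Set.univ _)).trans <|
  ((divHomeo c d hd).prodCongr (Homeomorph.refl _)).trans <|
  ((((piSubtypeHomeo fun i (t : unitInterval) => c i < (t:ℝ) ∧ (t:ℝ) < d i).trans
      (Homeomorph.piCongrRight fun i => ivlHomeo c d hc hcd hd i)).prodCongr
    (Homeomorph.refl _)).prodCongr (Homeomorph.refl _)).trans <|
  (Homeomorph.prodAssoc _ _ _).trans <|
  (absorbLoop n).trans <|
  (Homeomorph.prodComm _ _).trans <|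
  ((Homeomorph.refl _).prodCongr icoToIci)

end Bump


section Balls

/-- pick a strict subinterval inside an open real set -/
lemma subint {v : Set ℝ} (hv : IsOpen v) {a : ℝ} (ha : a ∈ v) (h0 : 0 ≤ a) (h1 : a ≤ 1) :
    ∃ p q : ℝ, 0 < p ∧ p < q ∧ q < 1 ∧ ∀ t : ℝ, p < t → t < q → t ∈ v := by
  obtain ⟨ε, hε, hball⟩ := Metric.isOpen_iff.mp hv a ha
  set ε' := min ε 1 with hε'def
  have hε' : 0 < ε' := lt_min hε one_pos
  have hε'1 : ε' ≤ 1 := min_le_right _ _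
  have hεε : ε' ≤ ε := min_le_left _ _
  set m := min (max a (ε'/3)) (1 - ε'/3) with hmdef
  have hm0 : 0 < m := by
    apply lt_min
    · exact lt_of_lt_of_le (by linarith) (le_max_right _ _)
    · linarith
  have hm1 : m < 1 := lt_of_le_of_lt (min_le_right _ _) (by linarith)
  have hma1 : m ≤ a + ε'/3 :=
    le_trans (min_le_left _ _) (max_le (by linarith) (by linarith))
  have hma2 : a - ε'/3 ≤ m :=
    le_min (le_trans (by linarith) (le_max_left _ _)) (by linarith)
  set δ := (min (ε'/3) (min m (1-m)))/2 with hδdef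
  have hδ : 0 < δ := by
    apply div_pos _ two_pos
    exact lt_min (by linarith) (lt_min hm0 (by linarith))
  have hδm : δ ≤ m/2 := by
    have : min (ε'/3) (min m (1-m)) ≤ m := le_trans (min_le_right _ _) (min_le_left _ _)
    rw [hδdef]; linarith
  have hδm2 : δ ≤ (1-m)/2 := by
    have : min (ε'/3) (min m (1-m)) ≤ 1-m := le_trans (min_le_right _ _) (min_le_right _ _)
    rw [hδdef]; linarith
  have hδε : δ ≤ ε'/6 := by
    have : min (ε'/3) (min m (1-m)) ≤ ε'/3 := min_le_left _ _
    rw [hδdef]; linarith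
  refine ⟨m - δ, m + δ, by linarith, by linarith, by linarith, ?_⟩
  intro t ht1 ht2
  apply hball
  rw [Metric.mem_ball, Real.dist_eq]
  have htm : |t - m| ≤ δ := abs_le.mpr ⟨by linarith, by linarith⟩
  have hma : |m - a| ≤ ε'/3 := abs_le.mpr ⟨by linarith, by linarith⟩
  calc |t - a| ≤ |t - m| + |m - a| := abs_sub_le t m a
  _ ≤ δ + ε'/3 := add_le_add htm hma
  _ < ε := by linarith


variable {n : ℕ} (c d : Fin n → ℝ)

/-- the tame ball inside `Oset` -/
theorem tame_ball (hc : ∀ i, 0 < c i) (hcd : ∀ i, c i < d i) (hd : ∀ i, d i < 1) :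
    ∃ B : Set Q', IsOpen B ∧ B.Nonempty ∧ closure B ⊆ Oset c d ∧
      ∃ e : ↥(Oset c d) ≃ₜ (Q' × {t : ℝ // 0 ≤ t}),
        ∀ x : ↥(Oset c d), (x : Q') ∈ closure B ↔ ((e x).2 : ℝ) ≤ 1 := by
  set e := ballHomeo c d hc hcd hd with hedef
  set C1 : Set (Q' × {t : ℝ // 0 ≤ t}) := {p | (p.2 : ℝ) < 1} with hC1
  set C2 : Set (Q' × {t : ℝ // 0 ≤ t}) := {p | (p.2 : ℝ) ≤ 1} with hC2
  have hC1open : IsOpen C1 :=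
    isOpen_lt (continuous_subtype_val.comp continuous_snd) continuous_const
  set B : Set Q' := Subtype.val '' (⇑e ⁻¹' C1) with hBdef
  set K : Set Q' := Subtype.val '' (⇑e ⁻¹' C2) with hKdef
  have hBopen : IsOpen B :=
    (Oset_open c d).isOpenMap_subtype_val _ (hC1open.preimage e.continuous)
  have hBne : B.Nonempty := by
    refine ⟨(e.symm (fun _ => 0, ⟨0, le_refl 0⟩)).val, e.symm _, ?_, rfl⟩
    show e (e.symm _) ∈ C1
    rw [Homeomorph.apply_symm_apply]
    simp [hC1]
  -- C2 compact
  have hTcomp : IsCompact {t : {t : ℝ // 0 ≤ t} | (t : ℝ) ≤ 1} := by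
    rw [IsEmbedding.subtypeVal.isCompact_iff]
    have : Subtype.val '' {t : {t : ℝ // 0 ≤ t} | (t : ℝ) ≤ 1} = Icc (0:ℝ) 1 := by
      ext s
      constructor
      · rintro ⟨t, ht, rfl⟩; exact ⟨t.prop, ht⟩
      · rintro ⟨h0, h1⟩; exact ⟨⟨s, h0⟩, h1, rfl⟩
    rw [this]
    exact isCompact_Icc
  have hC2comp : IsCompact C2 := by
    have : C2 = (univ : Set Q') ×ˢ {t : {t : ℝ // 0 ≤ t} | (t : ℝ) ≤ 1} := by
      ext p; simp [hC2, Set.mem_prod]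
    rw [this]
    exact isCompact_univ.prod hTcomp
  have hpre2 : ⇑e ⁻¹' C2 = ⇑e.symm '' C2 := by
    ext x
    constructor
    · intro h; exact ⟨e x, h, by simp⟩
    · rintro ⟨p, hp, rfl⟩; simpa using hp
  have hKcomp : IsCompact K := by
    rw [hKdef, hpre2]
    exact (hC2comp.image e.symm.continuous).image continuous_subtype_val
  have hBK : B ⊆ K := image_mono (preimage_mono (fun p hp => (le_of_lt (hp : ((p.2 : ℝ)) < 1) : ((p.2 : ℝ)) ≤ 1)))
  have hclBK : closure B ⊆ K := closure_minimal hBK hKcomp.isClosed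
  -- C2 is the closure of C1
  have hC2cl : C2 = closure C1 := by
    have h1 : C1 = (univ : Set Q') ×ˢ {t : {t : ℝ // 0 ≤ t} | (t : ℝ) < 1} := by
      ext p; simp [hC1, Set.mem_prod]
    have h2 : closure {t : {t : ℝ // 0 ≤ t} | (t : ℝ) < 1} = {t : {t : ℝ // 0 ≤ t} | (t : ℝ) ≤ 1} := by
      ext t
      rw [closure_subtype]
      have himg : Subtype.val '' {t : {t : ℝ // 0 ≤ t} | (t : ℝ) < 1} = Ico (0:ℝ) 1 := by
        ext s
        constructor
        · rintro ⟨t, ht, rfl⟩; exact ⟨t.prop, ht⟩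
        · rintro ⟨h0, h1⟩; exact ⟨⟨s, h0⟩, h1, rfl⟩
      rw [himg, closure_Ico (by norm_num : (0:ℝ) ≠ 1)]
      simp only [mem_Icc, mem_setOf_eq]
      exact ⟨fun h => h.2, fun h => ⟨t.prop, h⟩⟩
    rw [h1, closure_prod_eq, closure_univ, h2]
    ext p; simp [hC2, Set.mem_prod]
  have hKclB : K ⊆ closure B := by
    rw [hKdef, hC2cl, e.preimage_closure]
    exact subset_trans (image_closure_subset_closure_image continuous_subtype_val)
      (closure_mono (by rw [hBdef]))
  have hclB : closure B = K := le_antisymm hclBK hKclB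
  have hclBO : closure B ⊆ Oset c d := by
    rw [hclB, hKdef]
    exact Subtype.coe_image_subset _ _
  refine ⟨B, hBopen, hBne, hclBO, e, ?_⟩
  intro x
  rw [hclB, hKdef]
  constructor
  · rintro ⟨y, hy, hyx⟩
    have : y = x := Subtype.val_injective hyx
    subst this
    exact hy
  · intro h
    exact ⟨x, h, rfl⟩

end Balls

/-- every nonempty open subset of the Hilbert cube contains a tame open ball
whose closure is inside it -/
theorem exists_tame_ball {U : Set HilbertCube} (hU : IsOpen U) (hne : U.Nonempty) :
    ∃ B : Set HilbertCube, IsTameOpenBall B ∧ B.Nonempty ∧ closure B ⊆ U := by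
  obtain ⟨x, hx⟩ := hne
  obtain ⟨I, u, hIu, hpi⟩ := isOpen_pi_iff.mp hU x hx
  set n := (I.sup id) + 1 with hn
  have hchoice : ∀ i : Fin n, ∃ cd : ℝ × ℝ, 0 < cd.1 ∧ cd.1 < cd.2 ∧ cd.2 < 1 ∧
      (i.val ∈ I → ∀ t : unitInterval, cd.1 < (t:ℝ) → (t:ℝ) < cd.2 → t ∈ u i.val) := by
    intro i
    by_cases hi : i.val ∈ I
    · obtain ⟨hop, hmem⟩ := hIu i.val hi
      obtain ⟨v, hv, hveq⟩ := isOpen_induced_iff.mp hop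
      have hxv : ((x i.val : unitInterval) : ℝ) ∈ v := by
        rw [← hveq] at hmem; exact hmem
      obtain ⟨p, q, hp, hpq, hq, hsub⟩ := subint hv hxv (x i.val).prop.1 (x i.val).prop.2
      exact ⟨(p, q), hp, hpq, hq, fun _ t ht1 ht2 => by
        rw [← hveq]; exact hsub t ht1 ht2⟩
    · exact ⟨(1/3, 2/3), by norm_num, by norm_num, by norm_num, fun h => absurd h hi⟩
  choose cd h1 h2 h3 h4 using hchoice
  set c : Fin n → ℝ := fun i => (cd i).1 with hcdef
  set d : Fin n → ℝ := fun i => (cd i).2 with hddef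
  obtain ⟨B, hBopen, hBne, hclBO, e, hiff⟩ := tame_ball c d h1 h2 h3
  have hOU : Oset c d ⊆ U := by
    intro y hy
    apply hpi
    intro a haI
    have han : a < n := by
      have : a ≤ I.sup id := Finset.le_sup (f := id) haI
      omega
    have := Oset_base c d hy ⟨a, han⟩
    exact h4 ⟨a, han⟩ haI (y a) this.1 this.2
  exact ⟨B, ⟨hBopen, Oset c d, Oset_open c d, hclBO, e, hiff⟩, hBne,
    subset_trans hclBO hOU⟩


open Classical in
/-- the greedy ball-picking function -/
noncomputable def pick (V : Set HilbertCube) (f : ℕ → Set HilbertCube)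
    (ball : HilbertCube → ℝ → Set HilbertCube) : ℕ → Set HilbertCube
  | k => if h : ∃ B, (IsTameOpenBall B ∧ B.Nonempty ∧
          closure B ⊆ f k ∩ (V \ ⋃ j : Fin k, closure (pick V f ball j.val))) ∧
          ∃ x, B ⊆ ball x (((k:ℝ)+1)⁻¹) then h.choose else ∅
  decreasing_by all_goals exact j.isLt

end TameProof

/-- Every open subset of the Hilbert cube contains a dense tame open set. -/
theorem exists_dense_tameOpen (V : Set HilbertCube) (hV : IsOpen V) :
    ∃ W : Set HilbertCube, IsTameOpen W ∧ W ⊆ V ∧ V ⊆ closure W := by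
  classical
  obtain ⟨b, hbc, hbne, hbasis⟩ := TopologicalSpace.exists_countable_basis HilbertCube
  have hbnonempty : b.Nonempty := by
    obtain ⟨v, hv, _, _⟩ := hbasis.exists_subset_of_mem_open
      (mem_univ ((fun _ => 0) : HilbertCube)) isOpen_univ
    exact ⟨v, hv⟩
  obtain ⟨f, hf⟩ := hbc.exists_eq_range hbnonempty
  letI : MetricSpace HilbertCube := TopologicalSpace.metrizableSpaceMetric _
  set P : ℕ → Set HilbertCube := TameProof.pick V f Metric.ball with hP
  have hPspec : ∀ k, P k = ∅ ∨ ((IsTameOpenBall (P k) ∧ (P k).Nonempty ∧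
      closure (P k) ⊆ f k ∩ (V \ ⋃ j : Fin k, closure (P j.val))) ∧
      ∃ x, P k ⊆ Metric.ball x (((k:ℝ)+1)⁻¹)) := by
    intro k
    rw [hP, TameProof.pick]
    split
    · rename_i h
      exact Or.inr h.choose_spec
    · exact Or.inl rfl
  have hopenf : ∀ k, IsOpen (f k) := fun k => hbasis.isOpen (by rw [hf]; exact mem_range_self k)
  have hprevclosed : ∀ k, IsClosed (⋃ j : Fin k, closure (P j.val)) :=
    fun k => isClosed_iUnion_of_finite fun j => isClosed_closure
  have hPtame : ∀ k, (P k).Nonempty → IsTameOpenBall (P k) ∧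
      closure (P k) ⊆ f k ∩ (V \ ⋃ j : Fin k, closure (P j.val)) ∧
      ∃ x, P k ⊆ Metric.ball x (((k:ℝ)+1)⁻¹) := by
    intro k hk
    rcases hPspec k with h | h
    · rw [h] at hk; exact absurd hk (by simp)
    · exact ⟨h.1.1, h.1.2.2, h.2⟩
  have hPfill : ∀ k, (f k ∩ (V \ ⋃ j : Fin k, closure (P j.val))).Nonempty → (P k).Nonempty := by
    intro k hz
    obtain ⟨z, hzmem⟩ := hz
    have hrpos : (0:ℝ) < ((k:ℝ)+1)⁻¹ := by positivity
    have hUopen : IsOpen (f k ∩ (V \ ⋃ j : Fin k, closure (P j.val)) ∩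
        Metric.ball z (((k:ℝ)+1)⁻¹)) :=
      ((hopenf k).inter (hV.sdiff (hprevclosed k))).inter Metric.isOpen_ball
    have hUne : (f k ∩ (V \ ⋃ j : Fin k, closure (P j.val)) ∩
        Metric.ball z (((k:ℝ)+1)⁻¹)).Nonempty :=
      ⟨z, hzmem, Metric.mem_ball_self hrpos⟩
    obtain ⟨B, hB1, hB2, hB3⟩ := TameProof.exists_tame_ball hUopen hUne
    have hcond : ∃ B, (IsTameOpenBall B ∧ B.Nonempty ∧
        closure B ⊆ f k ∩ (V \ ⋃ j : Fin k, closure (TameProof.pick V f Metric.ball j.val))) ∧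
        ∃ x, B ⊆ Metric.ball x (((k:ℝ)+1)⁻¹) :=
      ⟨B, ⟨hB1, hB2, subset_trans hB3 inter_subset_left⟩,
        ⟨z, subset_trans (subset_trans subset_closure hB3) inter_subset_right⟩⟩
    rw [hP, TameProof.pick, dif_pos hcond]
    exact hcond.choose_spec.1.2.1
  set 𝒰 : Set (Set HilbertCube) := {B | (∃ k, P k = B) ∧ B.Nonempty} with h𝒰
  have hmem𝒰 : ∀ k, (P k).Nonempty → P k ∈ 𝒰 := fun k hk => ⟨⟨k, rfl⟩, hk⟩
  set W : Set HilbertCube := ⋃₀ 𝒰 with hW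
  have hsubW : ∀ k, (P k).Nonempty → P k ⊆ W := fun k hk => subset_sUnion_of_mem (hmem𝒰 k hk)
  -- pairwise disjoint closures
  have hdisj : 𝒰.Pairwise fun B C => closure B ∩ closure C = ∅ := by
    intro B hB C hC hne
    obtain ⟨⟨kB, hkB⟩, hBne⟩ := hB
    obtain ⟨⟨kC, hkC⟩, hCne⟩ := hC
    have hkk : kB ≠ kC := by
      intro h; apply hne; rw [← hkB, ← hkC, h]
    have key : ∀ k l : ℕ, k < l → closure (P k) ∩ closure (P l) = ∅ := by
      intro k l hkl
      apply eq_empty_iff_forall_notMem.mpr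
      rintro y ⟨hyk, hyl⟩
      have hlne : (P l).Nonempty := by
        by_contra hc
        rw [not_nonempty_iff_eq_empty.mp hc, closure_empty] at hyl
        exact hyl
      have := ((hPtame l hlne).2.1 hyl).2.2
      exact this (mem_iUnion.mpr ⟨⟨k, hkl⟩, hyk⟩)
    rcases lt_or_gt_of_ne hkk with h | h
    · rw [← hkB, ← hkC]; exact key kB kC h
    · rw [← hkB, ← hkC, inter_comm]; exact key kC kB h
  -- vanishing
  have hvanish : Vanishing 𝒰 := by
    intro 𝒰' h𝒰'open h𝒰'cover
    obtain ⟨δ, hδ, hVlb⟩ := lebesgue_number_lemma_of_metric_sUnion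
      isCompact_univ h𝒰'open (by rw [h𝒰'cover])
    set K₀ : ℕ := Nat.ceil (1/δ) with hK₀
    have hEsub : {F : Set HilbertCube | F ∈ 𝒰 ∧ ¬∃ u ∈ 𝒰', F ⊆ u} ⊆ P '' (Iio K₀) := by
      rintro F ⟨⟨⟨k, hk⟩, hFne⟩, hnosub⟩
      refine ⟨k, ?_, hk⟩
      by_contra hcon
      have hkK : K₀ ≤ k := by simpa using hcon
      obtain ⟨x, hx⟩ := (hPtame k (hk ▸ hFne)).2.2
      have hrδ : ((k:ℝ)+1)⁻¹ < δ := by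
        have h1 : (1:ℝ)/δ ≤ (K₀:ℝ) := Nat.le_ceil _
        have h2 : (K₀:ℝ) ≤ (k:ℝ) := Nat.cast_le.mpr hkK
        have hk1 : (0:ℝ) < (k:ℝ)+1 := by positivity
        have h4 : δ * (1/δ) = 1 := by field_simp
        have h3 : (1:ℝ) < δ * ((k:ℝ)+1) := by nlinarith
        rw [← one_div, div_lt_iff₀ hk1]
        linarith
      apply hnosub
      obtain ⟨u, hu𝒰', hu⟩ := hVlb x (mem_univ x)
      refine ⟨u, hu𝒰', ?_⟩
      rw [← hk]
      intro y hy
      apply hu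
      rw [Metric.mem_ball]
      exact lt_trans (by simpa [Metric.mem_ball, dist_comm] using hx hy) hrδ
    have hEfin : {F : Set HilbertCube | F ∈ 𝒰 ∧ ¬∃ u ∈ 𝒰', F ⊆ u}.Finite :=
      Set.Finite.subset ((Set.finite_Iio K₀).image P) hEsub
    haveI : Finite {F : Set HilbertCube // F ∈ 𝒰 ∧ ¬∃ u ∈ 𝒰', F ⊆ u} := hEfin.to_subtype
    exact locallyFinite_of_finite _
  have htame : ∀ B ∈ 𝒰, IsTameOpenBall B := by
    rintro B ⟨⟨k, hk⟩, hBne⟩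
    rw [← hk]
    exact (hPtame k (hk ▸ hBne)).1
  have hWV : W ⊆ V := by
    apply sUnion_subset
    rintro B ⟨⟨k, hk⟩, hBne⟩
    rw [← hk]
    intro y hy
    exact (((hPtame k (hk ▸ hBne)).2.1 (subset_closure hy)).2).1
  have hdense : V ⊆ closure W := by
    intro v hv
    rw [mem_closure_iff]
    intro G hGopen hvG
    obtain ⟨t, htb, hvt, htsub⟩ := hbasis.exists_subset_of_mem_open
      (show v ∈ G ∩ V from ⟨hvG, hv⟩) (hGopen.inter hV)
    obtain ⟨k, hkt⟩ : ∃ k, f k = t := by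
      have : t ∈ range f := by rw [← hf]; exact htb
      exact this
    by_cases hcase : (f k ∩ (V \ ⋃ j : Fin k, closure (P j.val))).Nonempty
    · have hPk := hPfill k hcase
      obtain ⟨w, hw⟩ := id hPk
      refine ⟨w, ?_, hsubW k hPk hw⟩
      have hsub := (hPtame k hPk).2.1
      have : w ∈ f k := (hsub (subset_closure hw)).1
      rw [hkt] at this
      exact (htsub this).1
    · have hvfk : v ∈ f k := by rw [hkt]; exact hvt
      have hvprev : v ∈ ⋃ j : Fin k, closure (P j.val) := by
        by_contra hc
        exact hcase ⟨v, hvfk, hv, hc⟩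
      obtain ⟨j, hj⟩ := mem_iUnion.mp hvprev
      have hPj : (P j.val).Nonempty := by
        by_contra hc
        rw [not_nonempty_iff_eq_empty.mp hc, closure_empty] at hj
        exact hj
      obtain ⟨w, hw1, hw2⟩ := mem_closure_iff.mp hj G hGopen hvG
      exact ⟨w, hw1, hsubW j.val hPj hw2⟩
  exact ⟨W, ⟨𝒰, hvanish, htame, hdisj, rfl⟩, hWV, hdense⟩
end
end

section
/- For every dense Gδ-set G ⊆ [0,1], the countable power G^ω = {x ∈ I^ω : x(n) ∈ G for all n ∈ ℕ} is not a tame Gδ-set in the Hilbert cube I^ω. -/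
open Set Topology

/-- The family of connected components of a subset `U` (connected components of the
subspace `U`, viewed as subsets of the ambient space). -/
def componentsOf {X : Type*} [TopologicalSpace X] (U : Set X) : Set (Set X) :=
  {C | ∃ x ∈ U, C = connectedComponentIn U x}

/-- A tame `Gδ`-set: the intersection of a decreasing sequence `(U n)` of tame open sets
such that the family of all connected components of all the `U n` is vanishing and the
closure of each connected component of `U (n+1)` is contained in some connected
component of `U n`. -/
def IsTameGδ (G : Set HilbertCube) : Prop :=
  ∃ U : ℕ → Set HilbertCube, (∀ n, IsTameOpen (U n)) ∧ (∀ n, U (n + 1) ⊆ U n) ∧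
    Vanishing (⋃ n, componentsOf (U n)) ∧
    (∀ n, ∀ C ∈ componentsOf (U (n + 1)), ∃ D ∈ componentsOf (U n), closure C ⊆ D) ∧
    G = ⋂ n, U n

lemma tameBall_closure_ne_univ {B : Set HilbertCube} (h : IsTameOpenBall B) :
    closure B ≠ univ := by
  obtain ⟨-, O, -, hcl, e, -⟩ := h
  intro hBu
  have hO : O = univ := univ_subset_iff.mp (hBu ▸ hcl)
  haveI : CompactSpace ↥O := isCompact_iff_compactSpace.mp (by rw [hO]; exact isCompact_univ)
  haveI := e.compactSpace
  have h1 : IsCompact (Prod.snd '' (univ : Set (HilbertCube × {t : ℝ // 0 ≤ t}))) :=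
    isCompact_univ.image continuous_snd
  rw [image_univ, Prod.range_snd] at h1
  have h2 := h1.image continuous_subtype_val
  rw [image_univ, Subtype.range_coe_subtype] at h2
  obtain ⟨M, hM⟩ := h2.bddAbove
  have hmem : max M 0 + 1 ∈ {t : ℝ | 0 ≤ t} := by
    simp only [mem_setOf_eq]
    have := le_max_right M 0
    linarith
  have h3 := hM hmem
  have h4 := le_max_left M 0
  linarith [h3]

lemma preconn_subset_ball {s : Set HilbertCube} (hs : IsPreconnected s) (hne : s.Nonempty)
    {𝒰 : Set (Set HilbertCube)} (hdisj : 𝒰.Pairwise fun B C => closure B ∩ closure C = ∅)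
    (hsub : s ⊆ ⋃ B ∈ 𝒰, interior (closure B)) :
    ∃ B ∈ 𝒰, s ⊆ interior (closure B) := by
  obtain ⟨x, hx⟩ := hne
  obtain ⟨B₀, hB₀, hxB₀⟩ := mem_iUnion₂.mp (hsub hx)
  refine ⟨B₀, hB₀, ?_⟩
  by_contra hcon
  obtain ⟨y, hys, hyn⟩ := not_subset.mp hcon
  have hyv : y ∈ ⋃ B ∈ 𝒰 \ {B₀}, interior (closure B) := by
    obtain ⟨B₁, hB₁, hyB₁⟩ := mem_iUnion₂.mp (hsub hys)
    refine mem_iUnion₂.mpr ⟨B₁, ⟨hB₁, ?_⟩, hyB₁⟩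
    intro hmem
    rw [mem_singleton_iff] at hmem
    exact hyn (hmem ▸ hyB₁)
  have key := hs (interior (closure B₀)) (⋃ B ∈ 𝒰 \ {B₀}, interior (closure B)) isOpen_interior
      (isOpen_biUnion fun _ _ => isOpen_interior) ?_ ⟨x, hx, hxB₀⟩ ⟨y, hys, hyv⟩
  · obtain ⟨z, -, hz0, hz1⟩ := key
    obtain ⟨B₁, hB₁, hzB₁⟩ := mem_iUnion₂.mp hz1
    have hne' : B₀ ≠ B₁ := by
      intro hEq
      exact hB₁.2 (by rw [mem_singleton_iff, hEq])
    have hd := hdisj hB₀ hB₁.1 hne'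
    have hz : z ∈ closure B₀ ∩ closure B₁ := ⟨interior_subset hz0, interior_subset hzB₁⟩
    rw [hd] at hz
    exact hz
  · intro w hw
    obtain ⟨B₁, hB₁, hwB₁⟩ := mem_iUnion₂.mp (hsub hw)
    by_cases hB : B₁ = B₀
    · exact Or.inl (hB ▸ hwB₁)
    · exact Or.inr (mem_iUnion₂.mpr ⟨B₁, ⟨hB₁, by simp [hB]⟩, hwB₁⟩)

lemma preconn_of_image {s : Set unitInterval} (h : IsPreconnected (Subtype.val '' s)) :
    IsPreconnected s := by
  intro u v hu hv hsuv hsu hsv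
  obtain ⟨U, hU, hUu⟩ := isOpen_induced_iff.mp hu
  obtain ⟨V, hV, hVv⟩ := isOpen_induced_iff.mp hv
  have key := h U V hU hV ?_ ?_ ?_
  · obtain ⟨z, hz, hzUV⟩ := key
    obtain ⟨w, hws, rfl⟩ := hz
    refine ⟨w, hws, ?_, ?_⟩
    · rw [← hUu]; exact hzUV.1
    · rw [← hVv]; exact hzUV.2
  · rintro z ⟨w, hws, rfl⟩
    rcases hsuv hws with h1 | h1
    · exact Or.inl (by rw [← hUu] at h1; exact h1)
    · exact Or.inr (by rw [← hVv] at h1; exact h1)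
  · obtain ⟨w, hws, hwu⟩ := hsu
    exact ⟨w.val, ⟨w, hws, rfl⟩, by rw [← hUu] at hwu; exact hwu⟩
  · obtain ⟨w, hws, hwv⟩ := hsv
    exact ⟨w.val, ⟨w, hws, rfl⟩, by rw [← hVv] at hwv; exact hwv⟩

lemma preconn_uball (c : unitInterval) (r : ℝ) : IsPreconnected (Metric.ball c r) := by
  apply preconn_of_image
  have himg : Subtype.val '' (Metric.ball c r) = Icc (0:ℝ) 1 ∩ Metric.ball (c : ℝ) r := by
    ext x
    constructor
    · rintro ⟨y, hy, rfl⟩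
      refine ⟨y.2, ?_⟩
      rw [Metric.mem_ball] at *
      rwa [← Subtype.dist_eq]
    · rintro ⟨hx, hxb⟩
      refine ⟨⟨x, hx⟩, ?_, rfl⟩
      rw [Metric.mem_ball] at *
      rwa [Subtype.dist_eq]
  rw [himg]
  exact ((convex_Icc (0:ℝ) 1).inter (convex_ball _ _)).isPreconnected

lemma preconn_uuniv : IsPreconnected (univ : Set unitInterval) := by
  apply preconn_of_image
  rw [image_univ, Subtype.range_coe_subtype]
  exact isPreconnected_Icc

lemma preconn_cube : IsPreconnected (univ : Set HilbertCube) := by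
  have h : (univ : Set HilbertCube) = Set.univ.pi (fun _ : ℕ => (univ : Set unitInterval)) := by
    simp
  rw [h]
  exact isPreconnected_univ_pi fun _ => preconn_uuniv

/-- For any dense `Gδ`-set `G ⊆ [0,1]`, the countable power `G^ω` is not a tame `Gδ`-set
in the Hilbert cube. -/
theorem countable_power_not_tameGδ (G : Set unitInterval) (hGd : Dense G) (hG : IsGδ G) :
    ¬ IsTameGδ {x : HilbertCube | ∀ n, x n ∈ G} := by
  rintro ⟨U, hTame, -, -, -, hEq⟩
  obtain ⟨𝒰, hvan, hballs, hdisj, hU0⟩ := hTame 0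
  -- G^ω is contained in the union of the ball family
  have hDsub : {x : HilbertCube | ∀ n, x n ∈ G} ⊆ ⋃₀ 𝒰 := by
    intro x hx
    have h1 : x ∈ ⋂ n, U n := by rw [← hEq]; exact hx
    rw [← hU0]
    exact mem_iInter.mp h1 0
  -- the residual set E
  set E : Set HilbertCube := {x | ∀ B ∈ 𝒰, x ∉ interior (closure B)} with hEdef
  have hEcomp : E = (⋃ B ∈ 𝒰, interior (closure B))ᶜ := by
    ext x
    simp [hEdef]
  have hEclosed : IsClosed E := by
    rw [hEcomp]
    exact (isOpen_biUnion fun _ _ => isOpen_interior).isClosed_compl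
  have hED : ∀ x ∈ E, ¬ (∀ n, x n ∈ G) := by
    intro x hxE hxD
    obtain ⟨B, hB𝒰, hxB⟩ := hDsub hxD
    exact hxE B hB𝒰 (interior_maximal subset_closure (hballs B hB𝒰).1 hxB)
  -- E is nonempty
  have hENe : E.Nonempty := by
    by_contra hcon
    rw [not_nonempty_iff_eq_empty] at hcon
    have hcov : (univ : Set HilbertCube) ⊆ ⋃ B ∈ 𝒰, interior (closure B) := by
      intro x _hx
      by_contra hx
      have hxE : x ∈ E := by
        intro B hB hxB
        exact hx (mem_iUnion₂.mpr ⟨B, hB, hxB⟩)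
      rw [hcon] at hxE
      exact hxE
    obtain ⟨B, hB, hBall⟩ := preconn_subset_ball preconn_cube ⟨fun _ => 0, mem_univ _⟩ hdisj hcov
    have hclB : closure B = univ :=
      univ_subset_iff.mp (subset_trans hBall interior_subset)
    exact tameBall_closure_ne_univ (hballs B hB) hclB
  -- Gδ decomposition
  obtain ⟨f, hfop, hfG⟩ := isGδ_iff_eq_iInter_nat.mp hG
  -- Baire category on E
  haveI : CompactSpace ↥E := isCompact_iff_compactSpace.mp hEclosed.isCompact
  haveI : Nonempty ↥E := hENe.to_subtype
  have hclosedfam : ∀ p : ℕ × ℕ,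
      IsClosed ((Subtype.val : ↥E → HilbertCube) ⁻¹' {x : HilbertCube | x p.1 ∈ (f p.2)ᶜ}) := by
    intro p
    have h1 : IsClosed {x : HilbertCube | x p.1 ∈ (f p.2)ᶜ} :=
      ((hfop p.2).isClosed_compl).preimage (continuous_apply p.1)
    exact h1.preimage continuous_subtype_val
  have hcoverfam : (⋃ p : ℕ × ℕ,
      (Subtype.val : ↥E → HilbertCube) ⁻¹' {x : HilbertCube | x p.1 ∈ (f p.2)ᶜ}) = univ := by
    ext z
    simp only [mem_iUnion, mem_univ, iff_true, mem_preimage, mem_setOf_eq, mem_compl_iff]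
    have hz := hED z.1 z.2
    push_neg at hz
    obtain ⟨k, hk⟩ := hz
    have hk2 : z.1 k ∉ ⋂ n, f n := by rw [← hfG]; exact hk
    rw [mem_iInter] at hk2
    push_neg at hk2
    obtain ⟨m, hm⟩ := hk2
    exact ⟨(k, m), hm⟩
  obtain ⟨⟨k, m⟩, hint⟩ := nonempty_interior_of_iUnion_of_closed hclosedfam hcoverfam
  obtain ⟨z₀, hz₀⟩ := hint
  obtain ⟨V, hVsub, hVopen, hzV⟩ := mem_interior.mp hz₀
  obtain ⟨W, hWopen, hWV⟩ := isOpen_induced_iff.mp hVopen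
  set e' : HilbertCube := z₀.1 with he'def
  have he'E : ∀ B ∈ 𝒰, e' ∉ interior (closure B) := z₀.2
  have he'W : e' ∈ W := by
    have : z₀ ∈ V := hzV
    rw [← hWV] at this
    exact this
  have hchunk : ∀ x ∈ E, x ∈ W → x k ∈ (f m)ᶜ := by
    intro x hxE hxW
    have h1 : (⟨x, hxE⟩ : ↥E) ∈ V := by rw [← hWV]; exact hxW
    exact hVsub h1
  -- extract a basic open box around e' inside W
  obtain ⟨I, u, hu, hIu⟩ := isOpen_pi_iff.mp hWopen e' he'W
  have hrad : ∀ i : ℕ, ∃ r : ℝ, 0 < r ∧ (i ∈ I → Metric.ball (e' i) r ⊆ u i) := by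
    intro i
    by_cases hi : i ∈ I
    · obtain ⟨r, hr, hball⟩ := Metric.isOpen_iff.mp (hu i hi).1 (e' i) (hu i hi).2
      exact ⟨r, hr, fun _ => hball⟩
    · exact ⟨1, one_pos, fun h => absurd h hi⟩
  choose ρ hρpos hρsub using hrad
  set K' : Finset ℕ := insert k I with hK'
  have hkK' : k ∈ K' := Finset.mem_insert_self k I
  have hN₀W : (↑K' : Set ℕ).pi (fun i => Metric.ball (e' i) (ρ i)) ⊆ W := by
    intro x hx
    apply hIu
    intro i hi
    exact hρsub i hi (hx i (Finset.mem_insert_of_mem hi))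
  -- the closed nowhere dense set F and slabs
  set F : Set unitInterval := (f m)ᶜ with hFdef
  have hGf : G ⊆ f m := by
    rw [hfG]
    exact iInter_subset f m
  have hFnd : ∀ V : Set unitInterval, IsOpen V → V.Nonempty → ∃ s ∈ V, s ∉ F := by
    intro V hV hne
    obtain ⟨g, hgV, hgG⟩ := hGd.inter_open_nonempty V hV hne
    exact ⟨g, hgV, fun hgF => hgF (hGf hgG)⟩
  set base : Set unitInterval := Metric.ball (e' k) (ρ k) \ F with hbasedef
  have hbase : ∀ δ : ℝ, 0 < δ → ∃ t, t ∈ base ∧ dist t (e' k) < δ := by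
    intro δ hδ
    obtain ⟨t, htV, htF⟩ := hFnd (Metric.ball (e' k) (min δ (ρ k))) Metric.isOpen_ball
      ⟨e' k, Metric.mem_ball_self (lt_min hδ (hρpos k))⟩
    rw [Metric.mem_ball] at htV
    exact ⟨t, ⟨Metric.mem_ball.mpr (lt_of_lt_of_le htV (min_le_right _ _)), htF⟩,
      lt_of_lt_of_le htV (min_le_left _ _)⟩
  set S : unitInterval → Set HilbertCube := fun t =>
    (↑K' : Set ℕ).pi (fun i => if i = k then connectedComponentIn base t
      else Metric.ball (e' i) (ρ i)) with hSdef
  have hupd : ∀ t ∈ base, ∀ x : HilbertCube, x ∈ (↑K' : Set ℕ).pi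
      (fun i => Metric.ball (e' i) (ρ i)) → Function.update x k t ∈ S t := by
    intro t ht x hx
    intro i hi
    by_cases hik : i = k
    · subst hik
      simpa using mem_connectedComponentIn ht
    · simpa [Function.update_of_ne hik, hik] using hx i hi
  have he'N₀ : e' ∈ (↑K' : Set ℕ).pi (fun i => Metric.ball (e' i) (ρ i)) := by
    intro i _
    exact Metric.mem_ball_self (hρpos i)
  have hSN₀ : ∀ t, S t ⊆ (↑K' : Set ℕ).pi (fun i => Metric.ball (e' i) (ρ i)) := by
    intro t x hx i hi
    have h1 := hx i hi
    by_cases hik : i = k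
    · subst hik
      simp only [if_pos rfl] at h1
      exact (connectedComponentIn_subset base t h1).1
    · simp only [if_neg hik] at h1
      exact h1
  have hSE : ∀ t ∈ base, ∀ x ∈ S t, x ∉ E := by
    intro t ht x hxS hxE
    have hxW : x ∈ W := hN₀W (hSN₀ t hxS)
    have hxF : x k ∈ F := hchunk x hxE hxW
    have hxJ := hxS k hkK'
    simp only [if_pos rfl] at hxJ
    exact (connectedComponentIn_subset base t hxJ).2 hxF
  have hSpre : ∀ t ∈ base, IsPreconnected (S t) := by
    intro t ht
    have hrw : S t = Set.univ.pi (fun i => if i ∈ (↑K' : Set ℕ) then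
        (if i = k then connectedComponentIn base t else Metric.ball (e' i) (ρ i)) else univ) := by
      ext x
      simp only [Set.mem_pi, mem_univ, true_implies]
      constructor
      · intro h i
        by_cases hi : i ∈ (↑K' : Set ℕ)
        · simp only [if_pos hi]; exact h i hi
        · simp only [if_neg hi]; exact mem_univ _
      · intro h i hi
        have h2 := h i
        simp only [if_pos hi] at h2
        exact h2
    rw [hrw]
    apply isPreconnected_univ_pi
    intro i
    by_cases hi : i ∈ (↑K' : Set ℕ)
    · simp only [if_pos hi]
      by_cases hik : i = k
      · simp only [if_pos hik]
        exact (isConnected_connectedComponentIn_iff.mpr ht).isPreconnected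
      · simp only [if_neg hik]
        exact preconn_uball _ _
    · simp only [if_neg hi]
      exact preconn_uuniv
  have hSne : ∀ t ∈ base, (S t).Nonempty :=
    fun t ht => ⟨Function.update e' k t, hupd t ht e' he'N₀⟩
  have hSsub : ∀ t ∈ base, S t ⊆ ⋃ B ∈ 𝒰, interior (closure B) := by
    intro t ht x hx
    by_contra hc
    have hxE : x ∈ E := by
      intro B hB hxB
      exact hc (mem_iUnion₂.mpr ⟨B, hB, hxB⟩)
    exact hSE t ht x hx hxE
  have hcolor : ∀ t : unitInterval, ∃ B : Set HilbertCube,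
      t ∈ base → B ∈ 𝒰 ∧ S t ⊆ interior (closure B) := by
    intro t
    by_cases ht : t ∈ base
    · obtain ⟨B, hB, hSB⟩ := preconn_subset_ball (hSpre t ht) (hSne t ht) hdisj (hSsub t ht)
      exact ⟨B, fun _ => ⟨hB, hSB⟩⟩
    · exact ⟨∅, fun h => absurd h ht⟩
  choose c hc using hcolor
  -- convergence helper
  have hlim : ∀ (x : HilbertCube) (tt : ℕ → unitInterval),
      (∀ n : ℕ, dist (tt n) (x k) < 1/((n:ℝ)+1)) →
      Filter.Tendsto (fun n => Function.update x k (tt n)) Filter.atTop (𝓝 x) := by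
    intro x tt htt
    rw [tendsto_pi_nhds]
    intro i
    by_cases hik : i = k
    · subst hik
      simp only [Function.update_self]
      rw [Metric.tendsto_atTop]
      intro ε hε
      obtain ⟨N, hN⟩ := exists_nat_one_div_lt hε
      refine ⟨N, fun n hn => ?_⟩
      have h1 : dist (tt n) (x i) < 1/((n:ℝ)+1) := htt n
      have h2 : 1/((n:ℝ)+1) ≤ 1/((N:ℝ)+1) := by
        apply one_div_le_one_div_of_le (by positivity)
        have h3 : (N:ℝ) ≤ (n:ℝ) := by exact_mod_cast hn
        linarith
      linarith [hN]
    · simp only [Function.update_of_ne hik]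
      exact tendsto_const_nhds
  -- membership in closure from accumulating colors
  have hclmem : ∀ B : Set HilbertCube,
      (∀ δ : ℝ, 0 < δ → ∃ t, t ∈ base ∧ dist t (e' k) < δ ∧ c t = B) → e' ∈ closure B := by
    intro B hB
    have hseq : ∀ n : ℕ, ∃ t, t ∈ base ∧ dist t (e' k) < 1/((n:ℝ)+1) ∧ c t = B :=
      fun n => hB _ (by positivity)
    choose tt htt1 htt2 htt3 using hseq
    apply IsClosed.mem_of_tendsto isClosed_closure (hlim e' tt htt2)
    filter_upwards with n
    have hmem := hupd (tt n) (htt1 n) e' he'N₀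
    have h2 := (hc (tt n) (htt1 n)).2 hmem
    rw [htt3 n] at h2
    exact interior_subset h2
  -- pigeonhole helper
  have hpigeon : ∀ (tt : ℕ → unitInterval), (∀ n, tt n ∈ base) →
      (∀ n : ℕ, dist (tt n) (e' k) < 1/((n:ℝ)+1)) → ∀ B : Set HilbertCube,
      {n : ℕ | c (tt n) = B}.Infinite →
      ∀ δ : ℝ, 0 < δ → ∃ t, t ∈ base ∧ dist t (e' k) < δ ∧ c t = B := by
    intro tt htt1 htt2 B hinf δ hδ
    obtain ⟨N, hN⟩ := exists_nat_one_div_lt hδ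
    have hex : ∃ n ∈ {n : ℕ | c (tt n) = B}, N < n := by
      by_contra hcc
      push_neg at hcc
      exact hinf ((Set.finite_Iic N).subset (fun n hn => hcc n hn))
    obtain ⟨n, hnB, hnN⟩ := hex
    refine ⟨tt n, htt1 n, ?_, hnB⟩
    have h2 : 1/((n:ℝ)+1) ≤ 1/((N:ℝ)+1) := by
      apply one_div_le_one_div_of_le (by positivity)
      have h3 : (N:ℝ) ≤ (n:ℝ) := by exact_mod_cast hnN.le
      linarith
    linarith [htt2 n, hN]
  set 𝒞 : Set (Set HilbertCube) := c '' base with h𝒞def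
  by_cases hfin : 𝒞.Finite
  · -- finitely many colors
    have hseq : ∀ n : ℕ, ∃ t, t ∈ base ∧ dist t (e' k) < 1/((n:ℝ)+1) :=
      fun n => hbase _ (by positivity)
    choose tt htt1 htt2 using hseq
    haveI : Finite ↥𝒞 := hfin.to_subtype
    obtain ⟨Bsub, hfib⟩ := Finite.exists_infinite_fiber
      (fun n : ℕ => (⟨c (tt n), ⟨tt n, htt1 n, rfl⟩⟩ : ↥𝒞))
    have hB₀𝒰 : (Bsub : Set HilbertCube) ∈ 𝒰 := by
      obtain ⟨t, ht, hct⟩ := Bsub.2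
      rw [← hct]
      exact (hc t ht).1
    have hinf₀ : {n : ℕ | c (tt n) = (Bsub : Set HilbertCube)}.Infinite := by
      have h1 := Set.infinite_coe_iff.mp hfib
      apply h1.mono
      intro n hn
      simp only [mem_preimage, mem_singleton_iff] at hn
      exact congrArg Subtype.val hn
    have hAcc := hpigeon tt htt1 htt2 _ hinf₀
    by_cases hα : ∃ δ : ℝ, 0 < δ ∧ ∀ t, t ∈ base → dist t (e' k) < δ →
        c t = (Bsub : Set HilbertCube)
    · -- constant color near e' k: e' is interior to a ball closure
      obtain ⟨δ₀, hδ₀, hconst⟩ := hα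
      have hrpos : 0 < min δ₀ (ρ k) := lt_min hδ₀ (hρpos k)
      set N₁ : Set HilbertCube := (↑K' : Set ℕ).pi (fun i =>
        if i = k then Metric.ball (e' k) (min δ₀ (ρ k)) else Metric.ball (e' i) (ρ i)) with hN₁def
      have hN₁open : IsOpen N₁ := by
        apply isOpen_set_pi (K'.finite_toSet)
        intro i _
        by_cases h : i = k
        · simp only [if_pos h]; exact Metric.isOpen_ball
        · simp only [if_neg h]; exact Metric.isOpen_ball
      have hN₁e' : e' ∈ N₁ := by
        intro i _
        by_cases h : i = k
        · subst h; simp only [if_pos rfl]; exact Metric.mem_ball_self hrpos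
        · simp only [if_neg h]; exact Metric.mem_ball_self (hρpos i)
      have hN₁cl : N₁ ⊆ closure (Bsub : Set HilbertCube) := by
        intro x hx
        have hxk : x k ∈ Metric.ball (e' k) (min δ₀ (ρ k)) := by
          have h1 := hx k hkK'
          simpa using h1
        have hstep : ∀ n : ℕ, ∃ t : unitInterval, dist t (x k) < 1/((n:ℝ)+1) ∧
            dist t (e' k) < min δ₀ (ρ k) ∧ t ∉ F := by
          intro n
          obtain ⟨t, htV, htF⟩ := hFnd
            (Metric.ball (x k) (1/((n:ℝ)+1)) ∩ Metric.ball (e' k) (min δ₀ (ρ k)))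
            (Metric.isOpen_ball.inter Metric.isOpen_ball)
            ⟨x k, Metric.mem_ball_self (by positivity), hxk⟩
          exact ⟨t, Metric.mem_ball.mp htV.1, Metric.mem_ball.mp htV.2, htF⟩
        choose tt' ha hb hcF using hstep
        have htbase : ∀ n, tt' n ∈ base := fun n =>
          ⟨Metric.mem_ball.mpr (lt_of_lt_of_le (hb n) (min_le_right _ _)), hcF n⟩
        have hcolor' : ∀ n, c (tt' n) = (Bsub : Set HilbertCube) :=
          fun n => hconst _ (htbase n) (lt_of_lt_of_le (hb n) (min_le_left _ _))
        apply IsClosed.mem_of_tendsto isClosed_closure (hlim x tt' ha)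
        filter_upwards with n
        have hxN₀ : x ∈ (↑K' : Set ℕ).pi (fun i => Metric.ball (e' i) (ρ i)) := by
          intro i hi
          have h1 := hx i hi
          by_cases h : i = k
          · subst h
            simp only [if_pos rfl] at h1
            exact Metric.mem_ball.mpr (lt_of_lt_of_le (Metric.mem_ball.mp h1) (min_le_right _ _))
          · simpa [if_neg h] using h1
        have hmem := hupd (tt' n) (htbase n) x hxN₀
        have h2 := (hc _ (htbase n)).2 hmem
        rw [hcolor' n] at h2
        exact interior_subset h2
      exact he'E _ hB₀𝒰 (mem_interior.mpr ⟨N₁, hN₁cl, hN₁open, hN₁e'⟩)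
    · -- a second accumulating color: collision of disjoint closures
      push_neg at hα
      have hseq2 : ∀ n : ℕ, ∃ t, t ∈ base ∧ dist t (e' k) < 1/((n:ℝ)+1) ∧
          c t ≠ (Bsub : Set HilbertCube) := by
        intro n
        obtain ⟨t, ht1, ht2, ht3⟩ := hα (1/((n:ℝ)+1)) (by positivity)
        exact ⟨t, ht1, ht2, ht3⟩
      choose ss hs1 hs2 hs3 using hseq2
      haveI : Finite ↥(𝒞 \ {(Bsub : Set HilbertCube)} : Set (Set HilbertCube)) :=
        (hfin.subset diff_subset).to_subtype
      obtain ⟨B₁sub, hfib1⟩ := Finite.exists_infinite_fiber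
        (fun n : ℕ => (⟨c (ss n), ⟨ss n, hs1 n, rfl⟩, by
          simpa using hs3 n⟩ : ↥(𝒞 \ {(Bsub : Set HilbertCube)} : Set (Set HilbertCube))))
      have hB₁ne : (B₁sub : Set HilbertCube) ≠ (Bsub : Set HilbertCube) := by
        intro h
        exact B₁sub.2.2 (by simpa using h)
      have hB₁𝒰 : (B₁sub : Set HilbertCube) ∈ 𝒰 := by
        obtain ⟨⟨t, ht, hct⟩, -⟩ := B₁sub.2
        rw [← hct]
        exact (hc t ht).1
      have hinf₁ : {n : ℕ | c (ss n) = (B₁sub : Set HilbertCube)}.Infinite := by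
        have h1 := Set.infinite_coe_iff.mp hfib1
        apply h1.mono
        intro n hn
        simp only [mem_preimage, mem_singleton_iff] at hn
        exact congrArg Subtype.val hn
      have hAcc1 := hpigeon ss hs1 hs2 _ hinf₁
      have h1 := hclmem _ hAcc
      have h2 := hclmem _ hAcc1
      have hd := hdisj hB₁𝒰 hB₀𝒰 hB₁ne
      have hcontr : e' ∈ closure (B₁sub : Set HilbertCube) ∩
          closure (Bsub : Set HilbertCube) := ⟨h2, h1⟩
      rw [hd] at hcontr
      exact hcontr
  · -- infinitely many colors contradict the vanishing property
    set k' : ℕ := (K'.sup id) + 1 with hk'def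
    have hk'K' : k' ∉ K' := by
      intro h
      have h1 := Finset.le_sup (f := id) h
      simp only [id] at h1
      omega
    set u₁ : Set HilbertCube := {x | ((x k' : ℝ)) < 2/3} with hu₁def
    set u₂ : Set HilbertCube := {x | (1:ℝ)/3 < (x k' : ℝ)} with hu₂def
    have hcont : Continuous (fun x : HilbertCube => ((x k' : ℝ))) :=
      continuous_subtype_val.comp (continuous_apply k')
    have hu₁open : IsOpen u₁ := isOpen_lt hcont continuous_const
    have hu₂open : IsOpen u₂ := isOpen_lt continuous_const hcont
    have hopens : ∀ u ∈ ({u₁, u₂} : Set (Set HilbertCube)), IsOpen u := by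
      rintro u (rfl | rfl)
      exacts [hu₁open, hu₂open]
    have hcov : ⋃₀ ({u₁, u₂} : Set (Set HilbertCube)) = univ := by
      apply eq_univ_of_forall
      intro x
      by_cases h : ((x k' : ℝ)) < 2/3
      · exact ⟨u₁, by simp, h⟩
      · refine ⟨u₂, by simp, ?_⟩
        simp only [hu₂def, mem_setOf_eq]
        push_neg at h
        linarith
    have hLF := hvan {u₁, u₂} hopens hcov
    have hfinsub := hLF.finite_nonempty_of_compact
    have hALL : {i : {F : Set HilbertCube // F ∈ 𝒰 ∧
        ¬∃ u ∈ ({u₁, u₂} : Set (Set HilbertCube)), F ⊆ u} |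
        (i.1 : Set HilbertCube).Nonempty} = univ := by
      apply eq_univ_of_forall
      intro i
      exact tameBall_nonempty (hballs i.1 i.2.1)
    rw [hALL] at hfinsub
    haveI hFin : Finite {F : Set HilbertCube // F ∈ 𝒰 ∧
        ¬∃ u ∈ ({u₁, u₂} : Set (Set HilbertCube)), F ⊆ u} :=
      Set.finite_univ_iff.mp hfinsub
    have hbadsub : 𝒞 ⊆ {F : Set HilbertCube | F ∈ 𝒰 ∧
        ¬∃ u ∈ ({u₁, u₂} : Set (Set HilbertCube)), F ⊆ u} := by
      rintro B ⟨t, ht, rfl⟩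
      refine ⟨(hc t ht).1, ?_⟩
      rintro ⟨u, hu, hBu⟩
      have hS := (hc t ht).2
      have hin : ∀ a : unitInterval, Function.update (Function.update e' k t) k' a ∈ S t := by
        intro a i hi
        have hik' : i ≠ k' := fun h => hk'K' (Finset.mem_coe.mp (h ▸ hi))
        rw [Function.update_of_ne hik']
        by_cases hik : i = k
        · subst hik
          simpa using mem_connectedComponentIn ht
        · simp only [Function.update_of_ne hik, if_neg hik]
          exact Metric.mem_ball_self (hρpos i)
      have hmem1 : Function.update (Function.update e' k t) k' 1 ∈ closure (c t) :=
        interior_subset (hS (hin 1))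
      have hmem0 : Function.update (Function.update e' k t) k' 0 ∈ closure (c t) :=
        interior_subset (hS (hin 0))
      rcases hu with rfl | hu
      · have hopen : IsOpen {x : HilbertCube | (2:ℝ)/3 < (x k' : ℝ)} :=
          isOpen_lt continuous_const hcont
        have hmemo : Function.update (Function.update e' k t) k' 1 ∈
            {x : HilbertCube | (2:ℝ)/3 < (x k' : ℝ)} := by
          simp only [mem_setOf_eq, Function.update_self]
          norm_num
        obtain ⟨b, hb1, hb2⟩ := mem_closure_iff.mp hmem1 _ hopen hmemo
        have hlt := hBu hb2
        simp only [hu₁def, mem_setOf_eq] at hlt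
        simp only [mem_setOf_eq] at hb1
        linarith
      · rw [mem_singleton_iff] at hu
        subst hu
        have hopen : IsOpen {x : HilbertCube | ((x k' : ℝ)) < 1/3} :=
          isOpen_lt hcont continuous_const
        have hmemo : Function.update (Function.update e' k t) k' 0 ∈
            {x : HilbertCube | ((x k' : ℝ)) < 1/3} := by
          simp only [mem_setOf_eq, Function.update_self]
          norm_num
        obtain ⟨b, hb1, hb2⟩ := mem_closure_iff.mp hmem0 _ hopen hmemo
        have hlt := hBu hb2
        simp only [hu₂def, mem_setOf_eq] at hlt
        simp only [mem_setOf_eq] at hb1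
        linarith
    have hbadinf : {F : Set HilbertCube | F ∈ 𝒰 ∧
        ¬∃ u ∈ ({u₁, u₂} : Set (Set HilbertCube)), F ⊆ u}.Infinite := by
      have h𝒞inf : 𝒞.Infinite := hfin
      exact h𝒞inf.mono hbadsub
    rw [← Set.infinite_coe_iff] at hbadinf
    haveI : Infinite {F : Set HilbertCube // F ∈ 𝒰 ∧
        ¬∃ u ∈ ({u₁, u₂} : Set (Set HilbertCube)), F ⊆ u} := hbadinf
    exact not_finite {F : Set HilbertCube // F ∈ 𝒰 ∧
        ¬∃ u ∈ ({u₁, u₂} : Set (Set HilbertCube)), F ⊆ u}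
end
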